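/- arXiv:2410.17560 — 9 statements merged into one kernel-verified Lean document; each statement's English description precedes it below -/
import Mathlib

section
/- Let R be a principal ideal domain with fraction field F a number field, let L/F be a finite extension of degree n, let S be the integral closure of R in L, and let α ∈ S with F(α) = L. Then there exist d₁, …, d_{n−1} ∈ R and monic polynomials f₁, …, f_{n−1} ∈ R[X] with deg f_i = i such that {1, f₁(α)/d₁, f₂(α)/d₂, …, f_{n−1}(α)/d_{n−1}} is an R-module basis of S. -/
open Polynomial

private theorem fg_principal {R F : Type*} [CommRing R] [IsDomain R]
    [IsPrincipalIdealRing R] [Field F] [Algebra R F] [IsFractionRing R F]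
    {J : Submodule R F} (hJ : J.FG) : ∃ c, J = Submodule.span R {c} := by
  let I : FractionalIdeal (nonZeroDivisors R) F := ⟨J, FractionalIdeal.isFractional_of_fg hJ⟩
  obtain ⟨c, hc⟩ := (FractionalIdeal.isPrincipal I).principal
  exact ⟨c, by simpa [I] using hc⟩

/-- **Existence of a normalised integral basis.**
Let `R` be a PID with fraction field `F` a number field, `L/F` a finite extension of
degree `n`, `S = integralClosure R L` and `α ∈ S` with `F(α) = L`.  Then there are
`d₁, …, d_{n-1} ∈ R` and monic `f_i ∈ R[X]` of degree `i` such that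
`{1, f₁(α)/d₁, …, f_{n-1}(α)/d_{n-1}}` is an `R`-basis of `S`. -/
theorem normalised_integral_basis_exists
    (R F L : Type*) [CommRing R] [IsDomain R] [IsPrincipalIdealRing R]
    [Field F] [Algebra R F] [IsFractionRing R F] [NumberField F]
    [Field L] [Algebra F L] [FiniteDimensional F L]
    [Algebra R L] [IsScalarTower R F L]
    (n : ℕ) (hn : Module.finrank F L = n)
    (α : L) (hαint : α ∈ integralClosure R L)
    (hgen : Algebra.adjoin F {α} = ⊤) :
    ∃ (d : ℕ → R) (f : ℕ → R[X])
      (b : Module.Basis (Fin n) R (integralClosure R L)),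
      (∀ i, 1 ≤ i → i ≤ n - 1 → (f i).Monic ∧ (f i).natDegree = i) ∧
      (∀ i : Fin n,
        ((i : ℕ) = 0 → ((b i : L) = 1)) ∧
        ((i : ℕ) ≠ 0 →
          algebraMap R L (d (i : ℕ)) * (b i : L) = aeval α (f (i : ℕ)))) := by
  classical
  have h0n : 0 < n := by
    rw [← hn]; exact Module.finrank_pos
  have hRF : Function.Injective (algebraMap R F) := IsFractionRing.injective R F
  have hFL : Function.Injective (algebraMap F L) := (algebraMap F L).injective
  have hRL : Function.Injective (algebraMap R L) := by
    rw [IsScalarTower.algebraMap_eq R F L]; exact hFL.comp hRF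
  haveI : CharZero L := charZero_of_injective_algebraMap hFL
  haveI : IsNoetherian R (integralClosure R L) := IsIntegralClosure.isNoetherian R F L _
  -- the power basis generated by `α`
  have hαF : IsIntegral F α := IsIntegral.of_finite F α
  let pb : PowerBasis F L := (Algebra.adjoin.powerBasis hαF).map
      ((Subalgebra.equivOfEq _ _ hgen).trans Subalgebra.topEquiv)
  have hpbgen : pb.gen = α := rfl
  have hdim : pb.dim = n := by rw [← hn, pb.finrank]
  let B : Module.Basis (Fin n) F L := pb.basis.reindex (finCongr hdim)
  have hB : ∀ j : Fin n, B j = α ^ (j : ℕ) := by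
    intro j
    rw [show B j = pb.basis ((finCongr hdim).symm j) from Module.Basis.reindex_apply _ _ j,
      pb.basis_eq_pow, hpbgen]
    rfl
  -- coordinates and scalars
  have hsm : ∀ (r : R) (z : L) (j : Fin n),
      B.coord j (algebraMap R L r * z) = algebraMap R F r * B.coord j z := by
    intro r z j
    rw [IsScalarTower.algebraMap_apply R F L, ← Algebra.smul_def, map_smul, smul_eq_mul]
  have hca : ∀ (g : R[X]), g.natDegree < n → ∀ j : Fin n,
      B.coord j (aeval α g) = algebraMap R F (g.coeff (j : ℕ)) := by
    intro g hg j
    have h1 : (aeval α g : L) = ∑ k : Fin n, algebraMap R F (g.coeff (k : ℕ)) • B k := by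
      rw [← Polynomial.aeval_map_algebraMap F α g,
        Polynomial.aeval_eq_sum_range' (lt_of_le_of_lt Polynomial.natDegree_map_le hg),
        ← Fin.sum_univ_eq_sum_range]
      refine Finset.sum_congr rfl fun k _ => ?_
      rw [Polynomial.coeff_map, hB k]
    rw [h1, Module.Basis.coord_apply, B.repr_sum_self]
  -- the main inductive construction
  have key : ∀ i : ℕ, i < n → ∃ (d : ℕ → R) (f : ℕ → R[X]) (x : ℕ → L),
      x 0 = 1 ∧
      (∀ j, j ≤ i → d j ≠ 0 ∧ (f j).Monic ∧ (f j).natDegree = j ∧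
        x j ∈ integralClosure R L ∧
        (∀ k : Fin n, j < (k : ℕ) → B.coord k (x j) = 0) ∧
        algebraMap R L (d j) * x j = aeval α (f j)) ∧
      (∀ j k, j ≤ k → k ≤ i → d j ∣ d k) ∧
      (∀ y : L, y ∈ integralClosure R L → (∀ k : Fin n, i < (k : ℕ) → B.coord k y = 0) →
        ∃ r : Fin (i + 1) → R, ∑ j : Fin (i + 1), r j • x (j : ℕ) = y) := by
    intro i
    induction i with
    | zero =>
      intro _
      have hB0 : (1 : L) = B ⟨0, h0n⟩ := by rw [hB]; simp
      refine ⟨fun _ => 1, fun _ => 1, fun _ => 1, rfl, ?_, fun _ _ _ _ => dvd_rfl, ?_⟩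
      · intro j hj
        have hj0 : j = 0 := Nat.le_zero.mp hj
        subst hj0
        refine ⟨one_ne_zero, monic_one, natDegree_one, one_mem _, ?_, by simp⟩
        intro k hk
        rw [hB0, Module.Basis.coord_apply, B.repr_self, Finsupp.single_apply]
        have : (⟨0, h0n⟩ : Fin n) ≠ k := by
          intro h; rw [← h] at hk; simp at hk
        simp [this]
      · intro y hy hc0
        have h1 : (∑ j : Fin n, B.repr y j • B j) = B.repr y ⟨0, h0n⟩ • B ⟨0, h0n⟩ := by
          refine Finset.sum_eq_single _ (fun b _ hb => ?_) (fun h => absurd (Finset.mem_univ _) h)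
          have hbpos : (0 : ℕ) < (b : ℕ) := Nat.pos_of_ne_zero fun h => hb (Fin.ext h)
          have := hc0 b hbpos
          rw [Module.Basis.coord_apply] at this
          rw [this, zero_smul]
        have hrep : y = algebraMap F L (B.repr y ⟨0, h0n⟩) := by
          conv_lhs => rw [← B.sum_repr y]
          rw [h1, ← hB0, Algebra.smul_def, mul_one]
        have hyint : IsIntegral R y := hy
        rw [hrep] at hyint
        have hint : IsIntegral R (B.repr y ⟨0, h0n⟩) := IsIntegral.tower_bot hFL hyint
        obtain ⟨r, hr⟩ := IsIntegrallyClosed.isIntegral_iff.mp hint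
        refine ⟨fun _ => r, ?_⟩
        rw [Fin.sum_univ_one, Algebra.smul_def, mul_one, IsScalarTower.algebraMap_apply R F L,
          hr, ← hrep]
    | succ i ih =>
      intro hi1
      obtain ⟨d, f, x, hx0, hinv, hdvd, hspan⟩ := ih (by omega)
      obtain ⟨hd0, hfm, hfd, hxS, hxc, hxe⟩ := hinv i le_rfl
      set fI : Fin n := ⟨i + 1, hi1⟩ with hfIdef
      set M : Submodule R (integralClosure R L) :=
        ⨅ (j : Fin n) (_ : i + 1 < (j : ℕ)),
          LinearMap.ker (((B.coord j).restrictScalars R).comp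
            (Subalgebra.val _).toLinearMap) with hMdef
      have hMmem : ∀ z : integralClosure R L,
          z ∈ M ↔ ∀ j : Fin n, i + 1 < (j : ℕ) → B.coord j (z : L) = 0 := by
        intro z
        rw [hMdef]
        simp [Submodule.mem_iInf, LinearMap.mem_ker]
      set ℓI : (integralClosure R L) →ₗ[R] F :=
        ((B.coord fI).restrictScalars R).comp (Subalgebra.val _).toLinearMap with hℓIdef
      have hℓI : ∀ z : integralClosure R L, ℓI z = B.coord fI (z : L) := fun z => rfl
      obtain ⟨c, hc⟩ := fg_principal ((IsNoetherian.noetherian M).map ℓI)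
      have hdiF : algebraMap R F (d i) ≠ 0 := fun h => hd0 (hRF (by rw [h, map_zero]))
      -- coordinates of α * x i
      have hXf : (X * f i).Monic := monic_X.mul hfm
      have hXfd : (X * f i).natDegree = i + 1 := by
        rw [monic_X.natDegree_mul hfm, natDegree_X, hfd, add_comm]
      have hde : algebraMap R L (d i) * (α * x i) = aeval α (X * f i) := by
        calc algebraMap R L (d i) * (α * x i) = α * (algebraMap R L (d i) * x i) := by ring
        _ = α * aeval α (f i) := by rw [hxe]
        _ = aeval α (X * f i) := by rw [map_mul, aeval_X]
      have hαxc : ∀ j : Fin n,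
          algebraMap R F (d i) * B.coord j (α * x i) = algebraMap R F ((X * f i).coeff (j : ℕ)) := by
        intro j
        rw [← hsm, hde, hca _ (by rw [hXfd]; exact hi1)]
      have hαx0 : ∀ j : Fin n, i + 1 < (j : ℕ) → B.coord j (α * x i) = 0 := by
        intro j hj
        have h2 := hαxc j
        rw [Polynomial.coeff_eq_zero_of_natDegree_lt (by rw [hXfd]; exact hj), map_zero] at h2
        exact (mul_eq_zero.mp h2).resolve_left hdiF
      have hαxI : algebraMap R F (d i) * B.coord fI (α * x i) = 1 := by
        have h2 := hαxc fI
        have : (X * f i).coeff ((fI : ℕ)) = 1 := by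
          have := hXf.coeff_natDegree
          rwa [hXfd] at this
        rw [this, map_one] at h2
        exact h2
      have hcoordne : B.coord fI (α * x i) ≠ 0 := by
        intro h
        rw [h, mul_zero] at hαxI
        exact zero_ne_one hαxI
      -- α * x i gives an element of M
      have hαxM : (⟨α, hαint⟩ * ⟨x i, hxS⟩ : integralClosure R L) ∈ M := by
        rw [hMmem]
        intro j hj
        exact hαx0 j hj
      have h1J : B.coord fI (α * x i) ∈ Submodule.span R {c} := by
        rw [← hc]
        exact Submodule.mem_map.mpr ⟨_, hαxM, rfl⟩
      obtain ⟨e, he⟩ := Submodule.mem_span_singleton.mp h1J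
      have he0 : e ≠ 0 := by
        intro h
        rw [h, zero_smul] at he
        exact hcoordne he.symm
      have hcJ : c ∈ Submodule.map ℓI M := by
        rw [hc]; exact Submodule.mem_span_singleton_self c
      obtain ⟨y₀, hy₀M, hy₀c⟩ := Submodule.mem_map.mp hcJ
      rw [hℓI] at hy₀c
      -- the correction element w
      set w : L := α * x i - algebraMap R L e * (y₀ : L) with hwdef
      have hwS : w ∈ integralClosure R L :=
        sub_mem (mul_mem hαint hxS) (mul_mem (Subalgebra.algebraMap_mem _ e) y₀.2)
      have hw0 : ∀ j : Fin n, i < (j : ℕ) → B.coord j w = 0 := by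
        intro j hj
        rw [hwdef, map_sub, hsm]
        rcases Nat.lt_or_ge (i + 1) (j : ℕ) with h | h
        · rw [hαx0 j h, (hMmem y₀).mp hy₀M j h, mul_zero, sub_zero]
        · have hjI : j = fI := Fin.ext (by simp [hfIdef]; omega)
          rw [hjI, hy₀c, ← he, Algebra.smul_def, sub_self]
      obtain ⟨r, hr⟩ := hspan w hwS hw0
      have hq : ∀ j : Fin (i + 1), ∃ u : R, d i = d (j : ℕ) * u := fun j =>
        hdvd (j : ℕ) i (Nat.lt_succ_iff.mp j.isLt) le_rfl
      choose q hqe using hq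
      set g : R[X] := X * f i - ∑ j : Fin (i + 1), C (r j * q j) * f (j : ℕ) with hgdef
      have hsumdeg : (∑ j : Fin (i + 1), C (r j * q j) * f (j : ℕ)).natDegree ≤ i := by
        apply Polynomial.natDegree_sum_le_of_forall_le
        intro j _
        refine le_trans (natDegree_C_mul_le _ _) ?_
        rw [(hinv (j : ℕ) (Nat.lt_succ_iff.mp j.isLt)).2.2.1]
        exact Nat.lt_succ_iff.mp j.isLt
      have hXfdeg : (X * f i).degree = ((i + 1 : ℕ) : WithBot ℕ) := by
        rw [Polynomial.degree_eq_natDegree hXf.ne_zero, hXfd]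
      have hsumdeg' : (∑ j : Fin (i + 1), C (r j * q j) * f (j : ℕ)).degree < (X * f i).degree := by
        rw [hXfdeg]
        calc (∑ j : Fin (i + 1), C (r j * q j) * f (j : ℕ)).degree
            ≤ ((∑ j : Fin (i + 1), C (r j * q j) * f (j : ℕ)).natDegree : WithBot ℕ) :=
              Polynomial.degree_le_natDegree
        _ ≤ ((i : ℕ) : WithBot ℕ) := by exact_mod_cast hsumdeg
        _ < ((i + 1 : ℕ) : WithBot ℕ) := by exact_mod_cast Nat.lt_succ_self i
      have hgm : g.Monic := hXf.sub_of_left hsumdeg'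
      have hgd : g.natDegree = i + 1 := by
        rw [hgdef, Polynomial.natDegree_sub_eq_left_of_natDegree_lt (by omega : _), hXfd]
      -- the defining identity for the new basis element
      have hey₀ : algebraMap R L e * (y₀ : L) = α * x i - w := by
        rw [hwdef]; ring
      have hgen' : algebraMap R L (e * d i) * (y₀ : L) = aeval α g := by
        calc algebraMap R L (e * d i) * (y₀ : L)
            = algebraMap R L (d i) * (algebraMap R L e * (y₀ : L)) := by rw [map_mul]; ring
        _ = algebraMap R L (d i) * (α * x i) - algebraMap R L (d i) * w := by
              rw [hey₀, mul_sub]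
        _ = aeval α (X * f i) - algebraMap R L (d i) * w := by rw [hde]
        _ = aeval α (X * f i)
              - ∑ j : Fin (i + 1), algebraMap R L (r j * q j) * aeval α (f (j : ℕ)) := by
              rw [← hr, Finset.mul_sum]
              congr 1
              refine Finset.sum_congr rfl fun j _ => ?_
              have hj' := (hinv (j : ℕ) (Nat.lt_succ_iff.mp j.isLt)).2.2.2.2.2
              calc algebraMap R L (d i) * (r j • x (j : ℕ))
                  = algebraMap R L (r j) * (algebraMap R L (q j)
                      * (algebraMap R L (d (j : ℕ)) * x (j : ℕ))) := by
                    rw [Algebra.smul_def, hqe j, map_mul]; ring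
              _ = algebraMap R L (r j * q j) * aeval α (f (j : ℕ)) := by
                    rw [hj', map_mul]; ring
        _ = aeval α g := by
              rw [hgdef, map_sub, map_sum]
              congr 1
              refine Finset.sum_congr rfl fun j _ => ?_
              rw [show (aeval α) (C (r j * q j) * f (j : ℕ))
                  = algebraMap R L (r j * q j) * aeval α (f (j : ℕ)) by
                rw [map_mul, aeval_C]]
      refine ⟨Function.update d (i + 1) (e * d i), Function.update f (i + 1) g,
        Function.update x (i + 1) (y₀ : L), ?_, ?_, ?_, ?_⟩
      · rw [Function.update_of_ne (by omega)]; exact hx0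
      · intro j hj
        rcases Nat.lt_or_ge j (i + 1) with h | h
        · have hne : j ≠ i + 1 := by omega
          rw [Function.update_of_ne hne, Function.update_of_ne hne, Function.update_of_ne hne]
          exact hinv j (by omega)
        · have hj' : j = i + 1 := by omega
          subst hj'
          rw [Function.update_self, Function.update_self, Function.update_self]
          exact ⟨mul_ne_zero he0 hd0, hgm, hgd, y₀.2,
            fun k hk => (hMmem y₀).mp hy₀M k hk, hgen'⟩
      · intro j k hjk hk
        rcases Nat.lt_or_ge k (i + 1) with h | h
        · rw [Function.update_of_ne (by omega), Function.update_of_ne (by omega)]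
          exact hdvd j k hjk (by omega)
        · have hk' : k = i + 1 := by omega
          subst hk'
          rw [Function.update_self]
          rcases Nat.lt_or_ge j (i + 1) with h2 | h2
          · rw [Function.update_of_ne (by omega)]
            exact dvd_mul_of_dvd_right (hdvd j i (by omega) le_rfl) e
          · have hj' : j = i + 1 := by omega
            subst hj'
            rw [Function.update_self]
      · intro y hyS hyc
        have hyM : (⟨y, hyS⟩ : integralClosure R L) ∈ M :=
          (hMmem _).mpr fun j hj => hyc j (by omega)
        have hcy : B.coord fI y ∈ Submodule.span R {c} := by
          rw [← hc]
          exact Submodule.mem_map.mpr ⟨_, hyM, rfl⟩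
        obtain ⟨rr, hrr⟩ := Submodule.mem_span_singleton.mp hcy
        have hy'S : y - algebraMap R L rr * (y₀ : L) ∈ integralClosure R L :=
          sub_mem hyS (mul_mem (Subalgebra.algebraMap_mem _ rr) y₀.2)
        have hy'c : ∀ k : Fin n, i < (k : ℕ) →
            B.coord k (y - algebraMap R L rr * (y₀ : L)) = 0 := by
          intro k hk
          rw [map_sub, hsm]
          rcases Nat.lt_or_ge (i + 1) (k : ℕ) with h | h
          · rw [hyc k h, (hMmem y₀).mp hy₀M k h, mul_zero, sub_zero]
          · have hkI : k = fI := Fin.ext (by simp [hfIdef]; omega)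
            rw [hkI, hy₀c, ← hrr, Algebra.smul_def, sub_self]
        obtain ⟨r', hr'⟩ := hspan _ hy'S hy'c
        refine ⟨Fin.snoc r' rr, ?_⟩
        rw [Fin.sum_univ_castSucc]
        have hterm : ∀ j : Fin (i + 1),
            (Fin.snoc r' rr : Fin (i + 2) → R) j.castSucc
              • Function.update x (i + 1) (y₀ : L) ((j.castSucc : Fin (i + 2)) : ℕ)
            = r' j • x (j : ℕ) := by
          intro j
          rw [Fin.snoc_castSucc, Fin.coe_castSucc,
            Function.update_of_ne (by omega : (j : ℕ) ≠ i + 1)]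
        rw [Finset.sum_congr rfl fun j _ => hterm j, hr', Fin.snoc_last,
          show ((Fin.last (i + 1) : Fin (i + 2)) : ℕ) = i + 1 from rfl,
          Function.update_self, Algebra.smul_def]
        ring
  -- assemble the basis
  obtain ⟨d, f, x, hx0, hinv, hdvd, hspan⟩ := key (n - 1) (by omega)
  have hle : ∀ j : Fin n, (j : ℕ) ≤ n - 1 := fun j => by
    have := j.isLt; omega
  let xS : Fin n → integralClosure R L := fun j => ⟨x (j : ℕ), (hinv (j : ℕ) (hle j)).2.2.2.1⟩
  have hnn : n - 1 + 1 = n := by omega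
  have hspan' : ∀ y : integralClosure R L, y ∈ Submodule.span R (Set.range xS) := by
    intro y
    have hdeg : ∀ k : Fin n, n - 1 < (k : ℕ) → B.coord k (y : L) = 0 := fun k hk => by
      have := k.isLt; omega
    obtain ⟨r, hr⟩ := hspan (y : L) y.2 hdeg
    refine (Submodule.mem_span_range_iff_exists_fun R).mpr
      ⟨fun j => r (Fin.cast hnn.symm j), ?_⟩
    apply Subtype.ext
    have hcoe : ((∑ j : Fin n, r (Fin.cast hnn.symm j) • xS j : integralClosure R L) : L)
        = ∑ j : Fin n, r (Fin.cast hnn.symm j) • x (j : ℕ) := by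
      simp
      rfl
    rw [hcoe, ← hr]
    refine (Fintype.sum_equiv (finCongr hnn) _ _ fun j => ?_).symm
    simp
  have htop : ⊤ ≤ Submodule.span F (Set.range fun j : Fin n => x (j : ℕ)) := by
    intro z _
    have hzalg : IsAlgebraic R z :=
      (IsFractionRing.isAlgebraic_iff R F L).mpr (Algebra.IsAlgebraic.isAlgebraic z)
    obtain ⟨zz, y, hy0, hzz⟩ : ∃ zz : integralClosure R L, ∃ y ≠ (0 : R),
        algebraMap R L y * z = zz := by
      obtain ⟨y, hy0, hint⟩ := IsAlgebraic.exists_integral_multiple hzalg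
      exact ⟨⟨y • z, hint⟩, y, hy0, (Algebra.smul_def y z).symm⟩
    have h1 : (zz : L) ∈ Submodule.span F (Set.range fun j : Fin n => x (j : ℕ)) := by
      have h2 := hspan' zz
      have h3 : (zz : L) ∈ Submodule.map (Subalgebra.val _).toLinearMap
          (Submodule.span R (Set.range xS)) := ⟨zz, h2, rfl⟩
      rw [Submodule.map_span] at h3
      have h4 : Submodule.span R ((Subalgebra.val _).toLinearMap '' Set.range xS) ≤
          Submodule.restrictScalars R
            (Submodule.span F (Set.range fun j : Fin n => x (j : ℕ))) := by
        rw [Submodule.span_le]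
        rintro _ ⟨_, ⟨j, rfl⟩, rfl⟩
        exact Submodule.subset_span ⟨j, rfl⟩
      exact h4 h3
    have hyF : algebraMap R F y ≠ 0 := fun h => hy0 (hRF (by rw [h, map_zero]))
    have hz : z = (algebraMap R F y)⁻¹ • (zz : L) := by
      rw [← hzz, Algebra.smul_def, map_inv₀, IsScalarTower.algebraMap_apply R F L,
        inv_mul_cancel_left₀ (fun h => hyF (hFL (by rw [h, map_zero])))]
    rw [hz]
    exact Submodule.smul_mem _ _ h1
  have hind : LinearIndependent F (fun j : Fin n => x (j : ℕ)) :=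
    linearIndependent_of_top_le_span_of_card_eq_finrank htop (by simp [hn])
  have hindR : LinearIndependent R (fun j : Fin n => x (j : ℕ)) :=
    hind.restrict_scalars (by
      intro a b hab
      apply hRF
      simpa [Algebra.smul_def] using hab)
  have hindS : LinearIndependent R xS := by
    apply LinearIndependent.of_comp (Subalgebra.val _).toLinearMap
    exact hindR
  let b : Module.Basis (Fin n) R (integralClosure R L) :=
    Module.Basis.mk hindS (fun y _ => hspan' y)
  refine ⟨d, f, b, ?_, ?_⟩
  · intro i _ h2
    exact ⟨(hinv i h2).2.1, (hinv i h2).2.2.1⟩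
  · intro i
    constructor
    · intro h0
      rw [show b i = xS i from Module.Basis.mk_apply _ _ i]
      show x (i : ℕ) = 1
      rw [h0, hx0]
    · intro _
      rw [show b i = xS i from Module.Basis.mk_apply _ _ i]
      show algebraMap R L (d (i : ℕ)) * x (i : ℕ) = aeval α (f (i : ℕ))
      exact (hinv (i : ℕ) (hle i)).2.2.2.2.2
end

section
/- Let {1, f₁(α)/d₁, …, f_{n−1}(α)/d_{n−1}} be a normalised integral basis of S over R. If g ∈ R[X] is a monic polynomial of degree i (1 ≤ i ≤ n−1) and q ∈ R is such that g(α)/q ∈ S, then q divides d_i in R. -/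
open Polynomial

/-- If `{1, f₁(α)/d₁, …, f_{n-1}(α)/d_{n-1}}` is a normalised integral basis of `S` over `R`,
`g ∈ R[X]` is monic of degree `i` (`1 ≤ i ≤ n-1`) and `q ∈ R` satisfies `g(α)/q ∈ S`,
then `q ∣ dᵢ` in `R`. -/
theorem normalised_integral_basis_divides
    (R F L : Type*) [CommRing R] [IsDomain R] [IsPrincipalIdealRing R]
    [Field F] [Algebra R F] [IsFractionRing R F] [NumberField F]
    [Field L] [Algebra F L] [FiniteDimensional F L]
    [Algebra R L] [IsScalarTower R F L]
    (n : ℕ) (hn : Module.finrank F L = n)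
    (α : L) (hαint : α ∈ integralClosure R L)
    (hgen : Algebra.adjoin F {α} = ⊤)
    (d : ℕ → R) (f : ℕ → R[X])
    (b : Module.Basis (Fin n) R (integralClosure R L))
    (hf : ∀ i, 1 ≤ i → i ≤ n - 1 → (f i).Monic ∧ (f i).natDegree = i)
    (hb : ∀ i : Fin n,
      ((i : ℕ) = 0 → ((b i : L) = 1)) ∧
      ((i : ℕ) ≠ 0 →
        algebraMap R L (d (i : ℕ)) * (b i : L) = aeval α (f (i : ℕ))))
    (i : ℕ) (hi1 : 1 ≤ i) (hi2 : i ≤ n - 1)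
    (g : R[X]) (hgmonic : g.Monic) (hgdeg : g.natDegree = i)
    (q : R)
    (hq : ∃ s : integralClosure R L, algebraMap R L q * (s : L) = aeval α g) :
    q ∣ d i := by
  obtain ⟨s, hs⟩ := hq
  have hφinj : Function.Injective (algebraMap R F) := IsFractionRing.injective R F
  have hRLinj : Function.Injective (algebraMap R L) := by
    rw [IsScalarTower.algebraMap_eq R F L]
    exact (algebraMap F L).injective.comp hφinj
  have hnpos : 0 < n := hn ▸ Module.finrank_pos
  have hin : i < n := by omega
  -- α is integral over F
  have hαF : IsIntegral F α := (IsIntegral.tower_top (A := F) hαint : IsIntegral F α)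
  -- the minimal polynomial of α has degree n
  have hmp : (minpoly F α).natDegree = n := by
    have h1 : IntermediateField.adjoin F {α} = ⊤ := by
      apply IntermediateField.toSubalgebra_injective
      rw [IntermediateField.adjoin_simple_toSubalgebra_of_isAlgebraic hαF.isAlgebraic, hgen,
        IntermediateField.top_toSubalgebra]
    have h2 := IntermediateField.adjoin.finrank hαF
    rw [h1] at h2
    rw [← h2, ← hn]
    exact (IntermediateField.finrank_top' (F := F) (E := L))
  -- no monic polynomial over R of degree < n annihilates α
  have hann : ∀ p : R[X], p.Monic → p.natDegree < n → aeval α p ≠ 0 := by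
    intro p hpm hpd h0
    have h0' : aeval α (p.map (algebraMap R F)) = 0 := by rwa [aeval_map_algebraMap]
    have hle := minpoly.min F α (hpm.map (algebraMap R F)) h0'
    have h1 : (minpoly F α).natDegree ≤ (p.map (algebraMap R F)).natDegree :=
      natDegree_le_natDegree hle
    rw [hmp, p.natDegree_map_eq_of_injective hφinj] at h1
    omega
  have hq0 : q ≠ 0 := by
    rintro rfl
    rw [map_zero, zero_mul] at hs
    exact hann g hgmonic (hgdeg ▸ hin) hs.symm
  have hd : ∀ j, 1 ≤ j → j ≤ n - 1 → d j ≠ 0 := by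
    intro j h1 h2 h0
    have hj := (hb ⟨j, by omega⟩).2 (by simpa using (by omega : j ≠ 0))
    simp only [h0, map_zero, zero_mul] at hj
    exact hann (f j) (hf j h1 h2).1 (by rw [(hf j h1 h2).2]; omega) hj.symm
  have hdF : ∀ j, 1 ≤ j → j ≤ n - 1 → algebraMap R F (d j) ≠ 0 := by
    intro j h1 h2 h0
    exact hd j h1 h2 (hφinj (by rw [h0, map_zero]))
  have hdL : ∀ j, 1 ≤ j → j ≤ n - 1 → algebraMap R L (d j) ≠ 0 := by
    intro j h1 h2 h0
    exact hd j h1 h2 (hRLinj (by rw [h0, map_zero]))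
  -- linear independence of powers of α
  have hLI : LinearIndependent F fun k : Fin n => α ^ (k : ℕ) := by
    have := linearIndependent_pow (K := F) α
    rwa [hmp] at this
  -- coefficients of the basis elements in terms of powers of α
  set e : Fin n → Fin n → F := fun j k =>
    if (j : ℕ) = 0 then (if (k : ℕ) = 0 then 1 else 0)
    else algebraMap R F ((f (j : ℕ)).coeff (k : ℕ)) / algebraMap R F (d (j : ℕ)) with he
  have hjbound : ∀ j : Fin n, (j : ℕ) ≤ n - 1 := fun j => by omega
  have hbrepr : ∀ j : Fin n, (b j : L) = ∑ k : Fin n, e j k • α ^ (k : ℕ) := by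
    intro j
    by_cases hj : (j : ℕ) = 0
    · rw [(hb j).1 hj]
      rw [Finset.sum_eq_single ⟨0, hnpos⟩]
      · simp [he, hj]
      · intro k _ hk
        have : (k : ℕ) ≠ 0 := fun h => hk (Fin.ext h)
        simp [he, hj, this]
      · simp
    · have hj1 : 1 ≤ (j : ℕ) := by omega
      have hfj := hf (j : ℕ) hj1 (hjbound j)
      have key : (algebraMap R L (d (j : ℕ))) * (∑ k : Fin n, e j k • α ^ (k : ℕ))
          = aeval α (f (j : ℕ)) := by
        rw [aeval_eq_sum_range' (n := n) (by omega) α, ← Fin.sum_univ_eq_sum_range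
          (fun k => (f (j : ℕ)).coeff k • α ^ k) n, Finset.mul_sum]
        refine Finset.sum_congr rfl fun k _ => ?_
        have h1 : (f (j : ℕ)).coeff (k : ℕ) • α ^ (k : ℕ)
            = (algebraMap R F ((f (j : ℕ)).coeff (k : ℕ))) • α ^ (k : ℕ) := by
          rw [algebraMap_smul]
        rw [h1, he]
        simp only [hj, if_false]
        rw [Algebra.smul_def, Algebra.smul_def, IsScalarTower.algebraMap_apply R F L (d (j : ℕ)),
          ← mul_assoc, ← map_mul, mul_div_cancel₀ _ (hdF _ hj1 (hjbound j))]
      exact mul_left_cancel₀ (hdL _ hj1 (hjbound j)) (((hb j).2 hj).trans key.symm)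
  -- coordinates of s
  set c : Fin n → R := fun j => b.repr s j with hc
  have hsum : (s : L) = ∑ j : Fin n, c j • (b j : L) := by
    conv_lhs => rw [← b.sum_repr s]
    push_cast
    rfl
  -- the main linear equation
  have E1 : ∑ j : Fin n, (q * c j) • (b j : L) = aeval α g := by
    rw [← hs, hsum, Finset.mul_sum]
    refine Finset.sum_congr rfl fun j _ => ?_
    rw [← Algebra.smul_def, smul_smul]
  have E3 : (aeval α g : L) = ∑ k : Fin n, (algebraMap R F (g.coeff (k : ℕ))) • α ^ (k : ℕ) := by
    rw [aeval_eq_sum_range' (n := n) (by omega) α,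
      ← Fin.sum_univ_eq_sum_range (fun k => g.coeff k • α ^ k) n]
    exact Finset.sum_congr rfl fun k _ => (algebraMap_smul F _ _).symm
  have E2 : ∑ k : Fin n, (∑ j : Fin n, algebraMap R F (q * c j) * e j k) • α ^ (k : ℕ)
      = ∑ j : Fin n, (q * c j) • (b j : L) := by
    calc ∑ k : Fin n, (∑ j : Fin n, algebraMap R F (q * c j) * e j k) • α ^ (k : ℕ)
        = ∑ k : Fin n, ∑ j : Fin n, (algebraMap R F (q * c j) * e j k) • α ^ (k : ℕ) := by
          exact Finset.sum_congr rfl fun k _ => Finset.sum_smul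
      _ = ∑ j : Fin n, ∑ k : Fin n, (algebraMap R F (q * c j) * e j k) • α ^ (k : ℕ) :=
          Finset.sum_comm
      _ = ∑ j : Fin n, (q * c j) • (b j : L) := by
          refine Finset.sum_congr rfl fun j _ => ?_
          rw [hbrepr j, Finset.smul_sum]
          refine Finset.sum_congr rfl fun k _ => ?_
          rw [mul_smul, algebraMap_smul]
  have main : ∀ k : Fin n,
      (∑ j : Fin n, algebraMap R F (q * c j) * e j k) = algebraMap R F (g.coeff (k : ℕ)) := by
    intro k
    have E4 : ∑ k : Fin n,
        ((∑ j : Fin n, algebraMap R F (q * c j) * e j k) - algebraMap R F (g.coeff (k : ℕ)))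
          • α ^ (k : ℕ) = 0 := by
      simp only [sub_smul, Finset.sum_sub_distrib]
      rw [E2, E1, E3, sub_self]
    have := Fintype.linearIndependent_iff.mp hLI _ E4 k
    exact sub_eq_zero.mp this
  -- reduction of the sum to a single term
  have hsingle : ∀ k : Fin n, i ≤ (k : ℕ) → (∀ j : Fin n, (k : ℕ) < (j : ℕ) → c j = 0) →
      ∑ j : Fin n, algebraMap R F (q * c j) * e j k
        = algebraMap R F (q * c k) * (1 / algebraMap R F (d (k : ℕ))) := by
    intro k hk hlarger
    have hk1 : 1 ≤ (k : ℕ) := by omega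
    have hekk : e k k = 1 / algebraMap R F (d (k : ℕ)) := by
      have hfk := hf (k : ℕ) hk1 (hjbound k)
      have h1 : (f (k : ℕ)).coeff (k : ℕ) = 1 := by
        have := hfk.1.coeff_natDegree
        rwa [hfk.2] at this
      simp only [he]
      rw [if_neg (by omega : ¬ (k : ℕ) = 0), h1, map_one]
    rw [← hekk]
    apply Finset.sum_eq_single
    · intro j _ hjk
      have hjk' : (j : ℕ) ≠ (k : ℕ) := fun h => hjk (Fin.ext h)
      rcases lt_or_gt_of_ne hjk' with hlt | hgt
      · by_cases hj0 : (j : ℕ) = 0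
        · simp only [he]
          rw [if_pos hj0, if_neg (by omega : ¬ (k : ℕ) = 0), mul_zero]
        · have hfj := hf (j : ℕ) (by omega) (hjbound j)
          have hz : (f (j : ℕ)).coeff (k : ℕ) = 0 :=
            coeff_eq_zero_of_natDegree_lt (by rw [hfj.2]; exact hlt)
          simp only [he]
          rw [if_neg hj0, hz, map_zero, zero_div, mul_zero]
      · rw [hlarger j hgt, mul_zero, map_zero, zero_mul]
    · intro h; exact absurd (Finset.mem_univ k) h
  -- downward induction: coordinates above i vanish
  have core : ∀ k : Fin n, i < (k : ℕ) → (∀ j : Fin n, (k : ℕ) < (j : ℕ) → c j = 0) →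
      c k = 0 := by
    intro k hk hlarger
    have h0 : algebraMap R F (g.coeff (k : ℕ)) = 0 := by
      rw [coeff_eq_zero_of_natDegree_lt (by omega : g.natDegree < (k : ℕ)), map_zero]
    have hm := main k
    rw [hsingle k (le_of_lt hk) hlarger, h0, mul_one_div] at hm
    have hqck : algebraMap R F (q * c k) = 0 := by
      rcases div_eq_zero_iff.mp hm with h | h
      · exact h
      · exact absurd h (hdF _ (by omega) (hjbound k))
    have : q * c k = 0 := hφinj (by rw [hqck, map_zero])
    rcases mul_eq_zero.mp this with h | h
    · exact absurd h hq0
    · exact h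
  have hcz : ∀ t : ℕ, ∀ k : Fin n, i < (k : ℕ) → n - 1 - (k : ℕ) ≤ t → c k = 0 := by
    intro t
    induction t with
    | zero =>
      intro k hk hk2
      exact core k hk fun j hj => absurd hj (by have := j.isLt; omega)
    | succ t ih =>
      intro k hk _
      exact core k hk fun j hj => ih j (by omega) (by have := j.isLt; omega)
  -- conclusion at index i
  have hm := main ⟨i, hin⟩
  rw [hsingle ⟨i, hin⟩ (le_refl i) (fun j hj => hcz n j (by exact hj) (by omega)),
    mul_one_div] at hm
  have hgi : g.coeff i = 1 := by
    have := hgmonic.coeff_natDegree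
    rwa [hgdeg] at this
  rw [hgi, map_one] at hm
  have heq : algebraMap R F (q * c ⟨i, hin⟩) = algebraMap R F (d i) :=
    (div_eq_one_iff_eq (hdF i hi1 hi2)).mp hm
  exact ⟨c ⟨i, hin⟩, (hφinj heq).symm⟩
end

section
/- Let {1, f₁(α)/d₁, …, f_{n−1}(α)/d_{n−1}} be a normalised integral basis of S over R. Then for all i, j ≥ 1 with i + j < n, the product d_i·d_j divides d_{i+j} in R. -/
open Polynomial

/-- If `{1, f₁(α)/d₁, …, f_{n-1}(α)/d_{n-1}}` is a normalised integral basis of `S` over `R`,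
then `dᵢ·dⱼ ∣ d_{i+j}` in `R` whenever `i, j ≥ 1` and `i + j < n`. -/
theorem normalised_integral_basis_mul_dvd
    (R F L : Type*) [CommRing R] [IsDomain R] [IsPrincipalIdealRing R]
    [Field F] [Algebra R F] [IsFractionRing R F] [NumberField F]
    [Field L] [Algebra F L] [FiniteDimensional F L]
    [Algebra R L] [IsScalarTower R F L]
    (n : ℕ) (hn : Module.finrank F L = n)
    (α : L) (hαint : α ∈ integralClosure R L)
    (hgen : Algebra.adjoin F {α} = ⊤)
    (d : ℕ → R) (f : ℕ → R[X])
    (b : Module.Basis (Fin n) R (integralClosure R L))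
    (hf : ∀ i, 1 ≤ i → i ≤ n - 1 → (f i).Monic ∧ (f i).natDegree = i)
    (hb : ∀ i : Fin n,
      ((i : ℕ) = 0 → ((b i : L) = 1)) ∧
      ((i : ℕ) ≠ 0 →
        algebraMap R L (d (i : ℕ)) * (b i : L) = aeval α (f (i : ℕ)))) :
    ∀ i j : ℕ, 1 ≤ i → 1 ≤ j → i + j < n → d i * d j ∣ d (i + j) := by
  classical
  intro i j hi hj hij
  have hn0 : 0 < n := lt_of_le_of_lt (Nat.zero_le _) hij
  set k := i + j with hk
  -- minimal polynomial of α over F has degree n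
  have hαF : IsIntegral F α := IsIntegral.of_finite F α
  have htop : (IntermediateField.adjoin F {α} : IntermediateField F L) = ⊤ := by
    apply IntermediateField.toSubalgebra_injective
    rw [IntermediateField.adjoin_simple_toSubalgebra_of_isAlgebraic hαF.isAlgebraic, hgen,
      IntermediateField.top_toSubalgebra]
  have hmin : (minpoly F α).natDegree = n := by
    rw [(Field.primitive_element_iff_minpoly_natDegree_eq F α).mp htop, hn]
  -- aeval α is injective on polynomials of degree < n
  have lemA : ∀ p : F[X], p.natDegree < n → aeval α p = 0 → p = 0 := by
    intro p hp hp0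
    by_contra h
    have hdvd : minpoly F α ∣ p := minpoly.dvd F α hp0
    have := Polynomial.natDegree_le_of_dvd hdvd h
    omega
  -- normalised data
  set d' : Fin n → R := fun m => if (m : ℕ) = 0 then 1 else d m with hd'
  set f' : Fin n → R[X] := fun m => if (m : ℕ) = 0 then 1 else f m with hf'
  have hf'm : ∀ m : Fin n, (f' m).Monic ∧ (f' m).natDegree = (m : ℕ) := by
    intro m
    by_cases h0 : (m : ℕ) = 0
    · simp [hf', h0, monic_one]
    · have hm1 : 1 ≤ (m : ℕ) := Nat.one_le_iff_ne_zero.mpr h0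
      have hm2 : (m : ℕ) ≤ n - 1 := by have := m.isLt; omega
      simpa [hf', h0] using hf m hm1 hm2
  have hfd : ∀ m : Fin n, aeval α (f' m) = algebraMap R L (d' m) * (b m : L) := by
    intro m
    by_cases h0 : (m : ℕ) = 0
    · simp [hf', hd', h0, (hb m).1 h0]
    · simp only [hf', hd', if_neg h0]
      exact ((hb m).2 h0).symm
  have hd'0 : ∀ m : Fin n, d' m ≠ 0 := by
    intro m hm0
    by_cases h0 : (m : ℕ) = 0
    · simp [hd', h0] at hm0
    · have hrel := (hb m).2 h0
      rw [show d (m : ℕ) = d' m by simp [hd', h0], hm0, map_zero, zero_mul] at hrel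
      have h1 : aeval α ((f m : R[X]).map (algebraMap R F)) = 0 := by
        rw [aeval_map_algebraMap, ← hrel]
      have hm1 : 1 ≤ (m : ℕ) := Nat.one_le_iff_ne_zero.mpr h0
      have hm2 : (m : ℕ) ≤ n - 1 := by have := m.isLt; omega
      have hmon := (hf m hm1 hm2).1
      have hdeg : ((f m : R[X]).map (algebraMap R F)).natDegree < n := by
        rw [hmon.natDegree_map, (hf m hm1 hm2).2]; exact m.isLt
      have := lemA _ hdeg h1
      exact (hmon.map (algebraMap R F)).ne_zero this
  set D : R := ∏ m : Fin n, d' m with hD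
  set Dm : Fin n → R := fun m => ∏ l ∈ Finset.univ.erase m, d' l with hDm
  have hDsplit : ∀ m : Fin n, D = d' m * Dm m := fun m =>
    (Finset.mul_prod_erase _ _ (Finset.mem_univ m)).symm
  have hDm0 : ∀ m : Fin n, Dm m ≠ 0 := fun m =>
    Finset.prod_ne_zero_iff.mpr fun l _ => hd'0 l
  -- indices
  have hik : i < n := by omega
  have hjk : j < n := by omega
  set i' : Fin n := ⟨i, hik⟩ with hi'
  set j' : Fin n := ⟨j, hjk⟩ with hj'
  set k' : Fin n := ⟨k, hij⟩ with hk'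
  set x : integralClosure R L := b i' * b j' with hx
  set c : Fin n → R := fun m => b.repr x m with hc
  set e : Fin n → R := fun m => d i * d j * (Dm m * c m) with he
  set P : R[X] := C D * (f i * f j) with hP
  set Q : R[X] := ∑ m : Fin n, C (e m) * f' m with hQ
  -- basic degree facts
  have hfi := hf i hi (by omega)
  have hfj := hf j hj (by omega)
  have hmulmon : (f i * f j).Monic := hfi.1.mul hfj.1
  have hmuldeg : (f i * f j).natDegree = k := by
    rw [hfi.1.natDegree_mul hfj.1, hfi.2, hfj.2]
  -- the key identity in L
  have hbi : algebraMap R L (d i) * (b i' : L) = aeval α (f i) :=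
    (hb i').2 (Nat.one_le_iff_ne_zero.mp hi)
  have hbj : algebraMap R L (d j) * (b j' : L) = aeval α (f j) :=
    (hb j').2 (Nat.one_le_iff_ne_zero.mp hj)
  have hxL : (x : L) = ∑ m : Fin n, algebraMap R L (c m) * (b m : L) := by
    conv_lhs => rw [← b.sum_repr x]
    push_cast
    simp [Algebra.smul_def, hc]
  have hL : aeval α P = aeval α Q := by
    have lhs : aeval α P = algebraMap R L (D * (d i * d j)) * (x : L) := by
      rw [hP, map_mul, map_mul, aeval_C, ← hbi, ← hbj, hx]
      push_cast
      ring
    rw [lhs, hxL, Finset.mul_sum, hQ, map_sum]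
    refine Finset.sum_congr rfl fun m _ => ?_
    have h1 : (aeval α) (C (e m) * f' m) = algebraMap R L (e m * d' m) * (b m : L) := by
      rw [map_mul, aeval_C, hfd m, ← mul_assoc, ← map_mul]
    have h2 : D * (d i * d j) * c m = e m * d' m := by
      simp only [he]
      rw [hDsplit m]
      ring
    rw [h1, ← h2]
    simp only [map_mul]
    ring
  -- equality of polynomials over R
  have hPdeg : P.natDegree < n := by
    calc P.natDegree ≤ (C D).natDegree + (f i * f j).natDegree := natDegree_mul_le
    _ < n := by rw [natDegree_C, hmuldeg]; omega
  have hQdeg : Q.natDegree < n := by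
    refine lt_of_le_of_lt (Polynomial.natDegree_sum_le_of_forall_le _ _ fun m _ => ?_)
      (show n - 1 < n by omega)
    calc (C (e m) * f' m).natDegree ≤ (C (e m)).natDegree + (f' m).natDegree :=
        natDegree_mul_le
    _ ≤ n - 1 := by rw [natDegree_C, (hf'm m).2]; have := m.isLt; omega
  have hPQ : P = Q := by
    apply Polynomial.map_injective (algebraMap R F) (IsFractionRing.injective R F)
    have h0 : aeval α (P.map (algebraMap R F) - Q.map (algebraMap R F)) = 0 := by
      rw [map_sub, aeval_map_algebraMap, aeval_map_algebraMap, hL, sub_self]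
    have hdeg : (P.map (algebraMap R F) - Q.map (algebraMap R F)).natDegree < n := by
      refine lt_of_le_of_lt (natDegree_sub_le _ _) ?_
      refine max_lt (lt_of_le_of_lt (natDegree_map_le) hPdeg)
        (lt_of_le_of_lt (natDegree_map_le) hQdeg)
    have := lemA _ hdeg h0
    rwa [sub_eq_zero] at this
  have hcoeff : ∀ l : ℕ, D * (f i * f j).coeff l = ∑ m : Fin n, e m * (f' m).coeff l := by
    intro l
    have := congrArg (fun p : R[X] => p.coeff l) hPQ
    simpa [hP, hQ, coeff_C_mul, Polynomial.finset_sum_coeff] using this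
  -- vanishing of high coefficients
  have hvan : ∀ t : ℕ, ∀ m : Fin n, n - (m : ℕ) ≤ t → k < (m : ℕ) → e m = 0 := by
    intro t
    induction t with
    | zero => intro m hm _; have := m.isLt; omega
    | succ t ih =>
      intro m hm hkm
      have hco := hcoeff (m : ℕ)
      rw [coeff_eq_zero_of_natDegree_lt (by rw [hmuldeg]; exact hkm), mul_zero] at hco
      have hc1 : (f' m).coeff (m : ℕ) = 1 := by
        rw [← (hf'm m).2]; exact (hf'm m).1.coeff_natDegree
      have hsum : ∑ l : Fin n, e l * (f' l).coeff (m : ℕ) = e m := by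
        rw [Finset.sum_eq_single m]
        · rw [hc1, mul_one]
        · intro l _ hlm
          rcases lt_or_gt_of_ne (fun h : (l : ℕ) = (m : ℕ) => hlm (Fin.ext h)) with h | h
          · rw [coeff_eq_zero_of_natDegree_lt (by rw [(hf'm l).2]; exact h), mul_zero]
          · rw [ih l (by have := l.isLt; omega) (by omega), zero_mul]
        · intro h; exact absurd (Finset.mem_univ m) h
      rw [hsum] at hco
      exact hco.symm
  -- read off the coefficient at k
  have hco := hcoeff k
  rw [show (f i * f j).coeff k = 1 from hmuldeg ▸ hmulmon.coeff_natDegree, mul_one] at hco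
  have hck : (f' k').coeff k = 1 := by
    have : (f' k').coeff ((k' : ℕ)) = 1 := by
      rw [← (hf'm k').2]; exact (hf'm k').1.coeff_natDegree
    exact this
  have hsum : ∑ l : Fin n, e l * (f' l).coeff k = e k' := by
    rw [Finset.sum_eq_single k']
    · rw [hck, mul_one]
    · intro l _ hlk
      have hne : (l : ℕ) ≠ k := fun h => hlk (Fin.ext h)
      rcases lt_or_gt_of_ne hne with h | h
      · rw [coeff_eq_zero_of_natDegree_lt (by rw [(hf'm l).2]; exact h), mul_zero]
      · rw [hvan (n - (l : ℕ)) l le_rfl h, zero_mul]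
    · intro h; exact absurd (Finset.mem_univ k') h
  rw [hsum] at hco
  -- hco : D = e k'
  have hDk : D = d k * Dm k' := by
    rw [hDsplit k']
    congr 1
    show (if k = 0 then 1 else d k) = d k
    exact if_neg (by omega)
  have hfin : d k * Dm k' = (d i * d j * c k') * Dm k' := by
    rw [← hDk, hco]
    simp only [he]
    ring
  exact ⟨c k', mul_right_cancel₀ (hDm0 k') hfin⟩
end

section
/- Let {1, f₁(α)/d₁, …, f_{n−1}(α)/d_{n−1}} be a normalised integral basis of S over R. Then d₁^{n(n−1)} divides disc(1, α, …, α^{n−1}) in R. -/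
open Polynomial

/-- If `{1, f₁(α)/d₁, …, f_{n-1}(α)/d_{n-1}}` is a normalised integral basis of `S` over `R`,
then `d₁^{n(n-1)}` divides `disc(1, α, …, α^{n-1})` in `R`. -/
theorem normalised_integral_basis_d1_pow_dvd_disc
    (R F L : Type*) [CommRing R] [IsDomain R] [IsPrincipalIdealRing R]
    [Field F] [Algebra R F] [IsFractionRing R F] [NumberField F]
    [Field L] [Algebra F L] [FiniteDimensional F L]
    [Algebra R L] [IsScalarTower R F L]
    (n : ℕ) (hn : Module.finrank F L = n)
    (α : L) (hαint : α ∈ integralClosure R L)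
    (hgen : Algebra.adjoin F {α} = ⊤)
    (d : ℕ → R) (f : ℕ → R[X])
    (b : Module.Basis (Fin n) R (integralClosure R L))
    (hf : ∀ i, 1 ≤ i → i ≤ n - 1 → (f i).Monic ∧ (f i).natDegree = i)
    (hb : ∀ i : Fin n,
      ((i : ℕ) = 0 → ((b i : L) = 1)) ∧
      ((i : ℕ) ≠ 0 →
        algebraMap R L (d (i : ℕ)) * (b i : L) = aeval α (f (i : ℕ))))
    (Dα : R) (hDα : algebraMap R F Dα = Algebra.discr F (fun i : Fin n => α ^ (i : ℕ))) :
    d 1 ^ (n * (n - 1)) ∣ Dα := by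
  rcases Nat.lt_or_ge n 2 with h2 | h2
  · have he : n * (n - 1) = 0 := by interval_cases n <;> rfl
    rw [he, pow_zero]
    exact one_dvd _
  -- n ≥ 2
  have i1 : Fin n := ⟨1, by omega⟩
  set i1 : Fin n := ⟨1, by omega⟩ with hi1
  obtain ⟨hf1m, hf1d⟩ := hf 1 le_rfl (by omega)
  set c : R := (f 1).coeff 0 with hc
  have hco1 : (f 1).coeff 1 = 1 := by
    have := hf1m.coeff_natDegree
    rwa [hf1d] at this
  have hfa : aeval α (f 1) = algebraMap R L c + α := by
    rw [aeval_eq_sum_range' (n := 2) (by omega)]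
    simp [Finset.sum_range_succ, hco1, Algebra.smul_def]
    rfl
  have hb1 : algebraMap R L (d 1) * (b i1 : L) = algebraMap R L c + α := by
    rw [← hfa]
    exact (hb i1).2 (by simp [hi1])
  by_cases hd : d 1 = 0
  · -- degenerate case : α ∈ F, the power family is linearly dependent
    have hα : α = - algebraMap R L c := by
      have := hb1
      rw [hd, map_zero, zero_mul] at this
      linear_combination -this
    have hdisc : Algebra.discr F (fun i : Fin n => α ^ (i : ℕ)) = 0 := by
      apply Algebra.discr_zero_of_not_linearIndependent
      intro hli
      rw [Fintype.linearIndependent_iff] at hli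
      set i0 : Fin n := ⟨0, by omega⟩ with hi0
      set g : Fin n → F := fun i =>
        if (i : ℕ) = 0 then algebraMap R F c else if (i : ℕ) = 1 then 1 else 0 with hg
      have hne : i0 ≠ i1 := by simp [hi0, hi1, Fin.ext_iff]
      have hsum : ∑ i, g i • α ^ (i : ℕ) = 0 := by
        rw [← Finset.sum_subset (Finset.subset_univ {i0, i1})]
        · rw [Finset.sum_pair hne]
          have h0 : g i0 = algebraMap R F c := by simp [hg, hi0]
          have h1 : g i1 = 1 := by simp [hg, hi1]
          rw [h0, h1, pow_zero, pow_one, one_smul, Algebra.smul_def, mul_one,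
            ← IsScalarTower.algebraMap_apply R F L, hα]
          simp
        · intro x _ hx
          have hx' : (x : ℕ) ≠ 0 ∧ (x : ℕ) ≠ 1 := by
            constructor <;> intro h <;> apply hx <;>
              simp [hi0, hi1, Fin.ext_iff, Finset.mem_insert, h]
          simp [hg, hx'.1, hx'.2]
      have := hli g hsum i1
      simp [hg, hi1] at this
    have hDα0 : Dα = 0 := by
      apply IsFractionRing.injective R F
      rw [hDα, hdisc, map_zero]
    exact hDα0 ▸ dvd_zero _
  -- main case
  set da : F := algebraMap R F (d 1) with hda
  have hda0 : da ≠ 0 := fun h => hd (IsFractionRing.injective R F (by rwa [map_zero]))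
  set aF : F := algebraMap R F c with haF
  set β : L := (b i1 : L) with hβ
  have hβint : IsIntegral R β := (b i1).2
  have hβeq : algebraMap F L da * β = algebraMap F L aF + α := by
    rw [hda, haF, ← IsScalarTower.algebraMap_apply, ← IsScalarTower.algebraMap_apply]
    exact hb1
  have hdaL : algebraMap F L da ≠ 0 := fun h => hda0 ((algebraMap F L).injective (by rwa [map_zero]))
  have hβval : β = (algebraMap F L da)⁻¹ * (algebraMap F L aF + α) := by
    field_simp
    linear_combination hβeq
  -- the change of basis matrix
  set P : Matrix (Fin n) (Fin n) F :=
    fun i j => da⁻¹ ^ (j : ℕ) * ((X + C aF) ^ (j : ℕ)).coeff i with hP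
  have hdeg : ∀ j : ℕ, ((X + C aF) ^ j).natDegree = j := by
    intro j
    rw [(monic_X_add_C aF).natDegree_pow, natDegree_X_add_C, mul_one]
  have hPtri : ∀ i j : Fin n, (j : ℕ) < (i : ℕ) → P i j = 0 := by
    intro i j hij
    show da⁻¹ ^ (j : ℕ) * ((X + C aF) ^ (j : ℕ)).coeff i = 0
    rw [coeff_eq_zero_of_natDegree_lt (by rw [hdeg]; exact hij), mul_zero]
  have hkey : Matrix.vecMul (fun i : Fin n => α ^ (i : ℕ)) (P.map (algebraMap F L)) =
      fun j : Fin n => β ^ (j : ℕ) := by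
    funext j
    have hsum : ∑ i : Fin n, (((X + C aF) ^ (j : ℕ)).coeff i) • α ^ (i : ℕ) =
        aeval α ((X + C aF) ^ (j : ℕ)) := by
      rw [aeval_eq_sum_range' (n := n) (by rw [hdeg]; omega)]
      exact Fin.sum_univ_eq_sum_range (fun k => ((X + C aF) ^ (j : ℕ)).coeff k • α ^ k) n
    have haev : aeval α ((X + C aF) ^ (j : ℕ)) = (algebraMap F L aF + α) ^ (j : ℕ) := by
      rw [map_pow, map_add, aeval_X, aeval_C, add_comm]
    simp only [Matrix.vecMul, dotProduct, Matrix.map_apply, hP]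
    rw [hβval, mul_pow, ← haev, ← hsum, Finset.mul_sum]
    refine Finset.sum_congr rfl fun i _ => ?_
    show α ^ (i : ℕ) * algebraMap F L (da⁻¹ ^ (j : ℕ) * ((X + C aF) ^ (j : ℕ)).coeff i) = _
    rw [map_mul, map_pow, map_inv₀, Algebra.smul_def]
    ring
  have hdet : P.det = da⁻¹ ^ (∑ i ∈ Finset.range n, i) := by
    rw [Matrix.det_of_upperTriangular hPtri]
    have hPd : ∀ i : Fin n, P i i = da⁻¹ ^ (i : ℕ) := by
      intro i
      show da⁻¹ ^ (i : ℕ) * ((X + C aF) ^ (i : ℕ)).coeff i = da⁻¹ ^ (i : ℕ)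
      have h1 := ((monic_X_add_C aF).pow (i : ℕ)).coeff_natDegree
      rw [hdeg] at h1
      rw [h1, mul_one]
    rw [Finset.prod_congr rfl (fun i _ => hPd i), Finset.prod_pow_eq_pow_sum]
    exact congrArg _ (Fin.sum_univ_eq_sum_range (fun k => k) n)
  have hdisc : Algebra.discr F (fun j : Fin n => β ^ (j : ℕ)) =
      da⁻¹ ^ (n * (n - 1)) * algebraMap R F Dα := by
    rw [← hkey, Algebra.discr_of_matrix_vecMul, hDα, hdet, ← pow_mul,
      Nat.mul_comm (∑ i ∈ Finset.range n, i) 2]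
    rw [show 2 * ∑ i ∈ Finset.range n, i = n * (n - 1) by
      rw [Nat.mul_comm]; exact Finset.sum_range_id_mul_two n]
  have hint : IsIntegral R (Algebra.discr F (fun j : Fin n => β ^ (j : ℕ))) :=
    Algebra.discr_isIntegral F (fun j => hβint.pow _)
  obtain ⟨Dβ, hDβ⟩ := IsIntegrallyClosed.isIntegral_iff.1 hint
  refine ⟨Dβ, IsFractionRing.injective R F ?_⟩
  rw [map_mul, map_pow, ← hda, hDβ, hdisc]
  field_simp
  rw [one_div, inv_pow, mul_assoc, mul_inv_cancel₀ (pow_ne_zero _ hda0), mul_one]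
end

section
/- Let {1, f₁(α)/d₁, …, f_{n−1}(α)/d_{n−1}} be a normalised integral basis of S over R, fix i with 1 ≤ i ≤ n−1, and let g ∈ R[X] be any monic polynomial of degree i such that g(α)/d_i ∈ S. Then {1, f₁(α)/d₁, …, f_{i−1}(α)/d_{i−1}, g(α)/d_i, f_{i+1}(α)/d_{i+1}, …, f_{n−1}(α)/d_{n−1}} is also an R-module basis of S. -/
open Polynomial

/-- If `{1, f₁(α)/d₁, …, f_{n-1}(α)/d_{n-1}}` is a normalised integral basis of `S` over `R`,
`1 ≤ i ≤ n-1`, and `g ∈ R[X]` is monic of degree `i` with `s = g(α)/dᵢ ∈ S`, then replacing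
the `i`-th basis element `fᵢ(α)/dᵢ` by `g(α)/dᵢ` again gives an `R`-basis of `S`. -/
theorem normalised_integral_basis_replace
    (R F L : Type*) [CommRing R] [IsDomain R] [IsPrincipalIdealRing R]
    [Field F] [Algebra R F] [IsFractionRing R F] [NumberField F]
    [Field L] [Algebra F L] [FiniteDimensional F L]
    [Algebra R L] [IsScalarTower R F L]
    (n : ℕ) (hn : Module.finrank F L = n)
    (α : L) (hαint : α ∈ integralClosure R L)
    (hgen : Algebra.adjoin F {α} = ⊤)
    (d : ℕ → R) (f : ℕ → R[X])
    (b : Module.Basis (Fin n) R (integralClosure R L))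
    (hf : ∀ i, 1 ≤ i → i ≤ n - 1 → (f i).Monic ∧ (f i).natDegree = i)
    (hb : ∀ i : Fin n,
      ((i : ℕ) = 0 → ((b i : L) = 1)) ∧
      ((i : ℕ) ≠ 0 →
        algebraMap R L (d (i : ℕ)) * (b i : L) = aeval α (f (i : ℕ))))
    (i : Fin n) (hi : (i : ℕ) ≠ 0)
    (g : R[X]) (hgmonic : g.Monic) (hgdeg : g.natDegree = (i : ℕ))
    (s : integralClosure R L)
    (hs : algebraMap R L (d (i : ℕ)) * (s : L) = aeval α g) :
    ∃ b' : Module.Basis (Fin n) R (integralClosure R L),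
      ⇑b' = Function.update ⇑b i s := by
  classical
  -- minimal polynomial degree
  have hint : IsIntegral F α := (IsIntegral.tower_top hαint : IsIntegral F α)
  have hmindeg : (minpoly F α).natDegree = n := by
    have h1 := IntermediateField.adjoin_simple_toSubalgebra_of_isAlgebraic hint.isAlgebraic
    have h2 : IntermediateField.adjoin F {α} = ⊤ := by
      apply IntermediateField.toSubalgebra_injective
      rw [h1, hgen]; rfl
    rw [← IntermediateField.adjoin.finrank hint, h2, IntermediateField.finrank_top', hn]
  have hRF : Function.Injective (algebraMap R F) := IsFractionRing.injective R F
  -- any R-polynomial of degree < n vanishing at α is zero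
  have haev0 : ∀ q : R[X], q.natDegree < n → aeval α q = 0 → q = 0 := by
    intro q hdeg h0
    by_contra hq
    have hq' : q.map (algebraMap R F) ≠ 0 := by
      simpa [Polynomial.map_eq_zero_iff hRF] using hq
    have h0' : aeval α (q.map (algebraMap R F)) = 0 := by
      rwa [aeval_map_algebraMap]
    have := minpoly.degree_le_of_ne_zero F α hq' h0'
    have h3 : (minpoly F α).natDegree ≤ (q.map (algebraMap R F)).natDegree :=
      natDegree_le_natDegree this
    have h4 : (q.map (algebraMap R F)).natDegree ≤ q.natDegree :=
      natDegree_map_le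
    omega
  -- normalise the data
  set dd : Fin n → R := fun j => if (j : ℕ) = 0 then 1 else d j with hdd
  set FF : Fin n → R[X] := fun j => if (j : ℕ) = 0 then 1 else f j with hFF
  have hFdeg : ∀ j : Fin n, (FF j).Monic ∧ (FF j).natDegree = (j : ℕ) := by
    intro j
    by_cases hj : (j : ℕ) = 0
    · simp [hFF, hj, monic_one]
    · have := hf j (Nat.one_le_iff_ne_zero.mpr hj) (by omega)
      simpa [hFF, hj] using this
  have hbdd : ∀ j : Fin n, algebraMap R L (dd j) * (b j : L) = aeval α (FF j) := by
    intro j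
    by_cases hj : (j : ℕ) = 0
    · simp [hdd, hFF, hj, (hb j).1 hj]
    · simpa [hdd, hFF, hj] using (hb j).2 hj
  have hdd0 : ∀ j : Fin n, dd j ≠ 0 := by
    intro j
    by_cases hj : (j : ℕ) = 0
    · simp [hdd, hj]
    · intro hd0
      have hddj : dd j = d (j : ℕ) := by simp [hdd, hj]
      have hd : d (j : ℕ) = 0 := by rw [← hddj]; exact hd0
      have : aeval α (FF j) = 0 := by
        rw [← hbdd j]
        simp [hd0, hd]
      have hz := haev0 (FF j) (by rw [(hFdeg j).2]; exact j.isLt) this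
      exact (hFdeg j).1.ne_zero hz
  set t : integralClosure R L := s - b i with ht
  set c : Fin n → R := fun j => b.repr t j with hc
  set Dex : Fin n → R := fun j => ∏ k ∈ Finset.univ.erase j, dd k with hDex
  have hDex0 : ∀ j, Dex j ≠ 0 := fun j => Finset.prod_ne_zero_iff.mpr fun k _ => hdd0 k
  have hDexD : ∀ j : Fin n, Dex j * dd j = ∏ k, dd k := by
    intro j
    rw [hDex]
    exact Finset.prod_erase_mul _ _ (Finset.mem_univ j)
  -- the coercion of t
  have hsum : (t : L) = ∑ j, algebraMap R L (c j) * (b j : L) := by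
    conv_lhs => rw [← b.sum_repr t]
    push_cast
    simp [Algebra.smul_def, hc]
  have htL : algebraMap R L (d (i : ℕ)) * (t : L) = aeval α (g - f i) := by
    push_cast [ht]
    rw [map_sub, ← hs, ← (hb i).2 hi]
    ring
  -- the key polynomial identity
  set Q : R[X] := (∑ j, C (c j * Dex j) * FF j) - C (Dex i) * (g - f i) with hQdef
  have hQ0 : Q = 0 := by
    apply haev0
    · have h1 : (∑ j, C (c j * Dex j) * FF j).natDegree ≤ n - 1 := by
        apply natDegree_sum_le_of_forall_le
        intro j _
        calc (C (c j * Dex j) * FF j).natDegree ≤ (FF j).natDegree := natDegree_C_mul_le _ _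
        _ = (j : ℕ) := (hFdeg j).2
        _ ≤ n - 1 := by omega
      have h2 : (C (Dex i) * (g - f i)).natDegree ≤ n - 1 := by
        calc (C (Dex i) * (g - f i)).natDegree ≤ (g - f i).natDegree := natDegree_C_mul_le _ _
        _ ≤ max g.natDegree (f i).natDegree := natDegree_sub_le _ _
        _ ≤ n - 1 := by
            rw [hgdeg, (hf i (by omega) (by omega)).2]
            have := i.isLt; omega
      have h3 : Q.natDegree ≤ max (∑ j, C (c j * Dex j) * FF j).natDegree
          (C (Dex i) * (g - f i)).natDegree := natDegree_sub_le _ _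
      have h4 : Q.natDegree ≤ n - 1 := le_trans h3 (max_le h1 h2)
      have hn1 : 1 ≤ n := by have := i.isLt; omega
      omega
    · rw [hQdef, map_sub, map_sum, map_mul, aeval_C, sub_eq_zero]
      calc ∑ j, aeval α (C (c j * Dex j) * FF j)
          = ∑ j, algebraMap R L (∏ k, dd k) * (algebraMap R L (c j) * (b j : L)) := by
            refine Finset.sum_congr rfl fun j _ => ?_
            rw [map_mul, aeval_C, ← hbdd j, ← hDexD j]
            push_cast [map_mul]
            ring
        _ = algebraMap R L (∏ k, dd k) * (t : L) := by rw [← Finset.mul_sum, ← hsum]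
        _ = algebraMap R L (Dex i) * aeval α (g - f i) := by
            have hddi : dd i = d (i : ℕ) := by simp [hdd, hi]
            rw [← htL, ← hDexD i, hddi]
            push_cast [map_mul]
            ring
  -- coefficient comparison
  have hcoeff : ∀ k : ℕ, ∑ j, c j * Dex j * (FF j).coeff k
      = Dex i * (g.coeff k - (f (i : ℕ)).coeff k) := by
    intro k
    have h := congrArg (fun p => p.coeff k) hQ0
    simp only [hQdef, coeff_sub, finset_sum_coeff, coeff_C_mul, coeff_zero, sub_eq_zero] at h
    exact h
  have hfi := hf (i : ℕ) (by omega) (by have := i.isLt; omega)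
  have hgfcoeff : ∀ k : ℕ, (i : ℕ) ≤ k → g.coeff k - (f (i : ℕ)).coeff k = 0 := by
    intro k hk
    rcases eq_or_lt_of_le hk with h | h
    · have h1 : g.coeff k = 1 := by rw [← h, ← hgdeg]; exact hgmonic.coeff_natDegree
      have h2 : (f (i : ℕ)).coeff k = 1 := by
        rw [← h]
        nth_rewrite 2 [← hfi.2]
        exact hfi.1.coeff_natDegree
      rw [h1, h2, sub_self]
    · rw [coeff_eq_zero_of_natDegree_lt (by rw [hgdeg]; exact h),
        coeff_eq_zero_of_natDegree_lt (by rw [hfi.2]; exact h), sub_self]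
  -- downward induction: coordinates ≥ i vanish
  have key : ∀ m : ℕ, ∀ k : Fin n, n ≤ (k : ℕ) + m → (i : ℕ) ≤ (k : ℕ) → c k = 0 := by
    intro m
    induction m with
    | zero => intro k hk _; have := k.isLt; omega
    | succ m ih =>
      intro k hk hik
      have heq := hcoeff (k : ℕ)
      rw [hgfcoeff _ hik, mul_zero] at heq
      rw [Finset.sum_eq_single k] at heq
      · have hco : (FF k).coeff (k : ℕ) = 1 := by
          conv_lhs => rw [← (hFdeg k).2]
          exact (hFdeg k).1.coeff_natDegree
        rw [hco, mul_one] at heq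
        rcases mul_eq_zero.mp heq with h | h
        · exact h
        · exact absurd h (hDex0 k)
      · intro j _ hj
        rcases lt_or_gt_of_ne (fun h => hj (Fin.val_injective h)) with h | h
        · rw [coeff_eq_zero_of_natDegree_lt (by rw [(hFdeg j).2]; exact h), mul_zero]
        · rw [ih j (by omega) (by omega), zero_mul, zero_mul]
      · intro h; exact absurd (Finset.mem_univ k) h
  have hci : c i = 0 := key n i (by omega) le_rfl
  have hrti : b.repr t i = 0 := hci
  -- build the new basis via a linear automorphism
  set φ : integralClosure R L →ₗ[R] integralClosure R L :=
    LinearMap.id + (b.coord i).smulRight t with hφ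
  set ψ : integralClosure R L →ₗ[R] integralClosure R L :=
    LinearMap.id - (b.coord i).smulRight t with hψ
  have hcomp1 : φ ∘ₗ ψ = LinearMap.id := by
    refine LinearMap.ext fun x => ?_
    simp only [hφ, hψ, LinearMap.comp_apply, LinearMap.add_apply, LinearMap.sub_apply,
      LinearMap.id_apply, LinearMap.smulRight_apply, map_sub, map_smul, Module.Basis.coord_apply,
      Finsupp.coe_sub, Finsupp.coe_smul, Pi.sub_apply, Pi.smul_apply, hrti, smul_eq_mul,
      mul_zero, sub_zero, zero_smul, add_zero]
    module
  have hcomp2 : ψ ∘ₗ φ = LinearMap.id := by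
    refine LinearMap.ext fun x => ?_
    simp only [hφ, hψ, LinearMap.comp_apply, LinearMap.add_apply, LinearMap.sub_apply,
      LinearMap.id_apply, LinearMap.smulRight_apply, map_add, map_smul, Module.Basis.coord_apply,
      Finsupp.coe_add, Finsupp.coe_smul, Pi.add_apply, Pi.smul_apply, hrti, smul_eq_mul,
      mul_zero, add_zero, zero_smul, sub_zero]
    module
  set e : integralClosure R L ≃ₗ[R] integralClosure R L :=
    LinearEquiv.ofLinear φ ψ hcomp1 hcomp2 with he
  refine ⟨b.map e, ?_⟩
  funext j
  rw [Module.Basis.map_apply]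
  by_cases hj : j = i
  · subst hj
    rw [Function.update_self]
    show φ (b j) = s
    have h1 : b.repr (b j) j = 1 := by simp [Module.Basis.repr_self]
    simp only [hφ, LinearMap.add_apply, LinearMap.id_apply, LinearMap.smulRight_apply,
      Module.Basis.coord_apply, h1, one_smul, ht]
    module
  · rw [Function.update_of_ne hj]
    show φ (b j) = b j
    have h0 : b.repr (b j) i = 0 := by
      rw [Module.Basis.repr_self]
      exact Finsupp.single_eq_of_ne (Ne.symm hj)
    simp only [hφ, LinearMap.add_apply, LinearMap.id_apply, LinearMap.smulRight_apply,
      Module.Basis.coord_apply, h0, zero_smul, add_zero]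
end

section
/- If fh ≡ −1 (mod 4ℤ[i]), then {1, (i+γ)/2} is a ℤ[i]-module basis of O_M and the relative discriminant ideal of M/K is generated by fh. -/
set_option synthInstance.maxHeartbeats 1000000
set_option maxHeartbeats 1000000

lemma zmod4_key : ∀ a b c d : ZMod 4,
    a^2 - b^2 + c^2 - d^2 = 0 → 2*(a*b + c*d) = 0 →
    (a + d)^2 = 0 ∧ (b - c)^2 = 0 := by decide

lemma int_key (a b c d : ℤ) (h1 : (4:ℤ) ∣ a^2 - b^2 + c^2 - d^2)
    (h2 : (4:ℤ) ∣ 2*(a*b + c*d)) : (2:ℤ) ∣ a + d ∧ (2:ℤ) ∣ b - c := by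
  have h1' : ((a:ZMod 4))^2 - (b:ZMod 4)^2 + (c:ZMod 4)^2 - (d:ZMod 4)^2 = 0 := by
    have := (ZMod.intCast_zmod_eq_zero_iff_dvd _ 4).mpr h1
    push_cast at this; exact this
  have h2' : 2*((a:ZMod 4)*(b:ZMod 4) + (c:ZMod 4)*(d:ZMod 4)) = 0 := by
    have := (ZMod.intCast_zmod_eq_zero_iff_dvd _ 4).mpr h2
    push_cast at this; exact this
  obtain ⟨e1, e2⟩ := zmod4_key _ _ _ _ h1' h2'
  have key : ∀ x : ℤ, ((x : ZMod 4))^2 = 0 → (2:ℤ) ∣ x := by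
    intro x hx
    have h4 : ((4:ℕ):ℤ) ∣ x^2 := by
      rw [← ZMod.intCast_zmod_eq_zero_iff_dvd]; push_cast; exact hx
    have h2x : (2:ℤ) ∣ x^2 := dvd_trans (by norm_num) h4
    exact Int.Prime.dvd_pow' (by norm_num) h2x
  constructor
  · exact key _ (by push_cast; convert e1 using 2)
  · exact key _ (by push_cast; convert e2 using 2)

lemma gauss_key (u v : GaussianInt) (h : (4:GaussianInt) ∣ u^2 + v^2) :
    (2:GaussianInt) ∣ u - Zsqrtd.sqrtd * v := by
  have h4 : ((4:ℤ) : GaussianInt) = 4 := by push_cast; ring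
  have h2 : ((2:ℤ) : GaussianInt) = 2 := by push_cast; ring
  rw [← h4, Zsqrtd.intCast_dvd] at h
  rw [← h2, Zsqrtd.intCast_dvd]
  simp only [Zsqrtd.re_add, Zsqrtd.im_add, Zsqrtd.re_mul, Zsqrtd.im_mul, Zsqrtd.re_sub,
    Zsqrtd.im_sub, pow_two, Zsqrtd.re_sqrtd, Zsqrtd.im_sqrtd] at h ⊢
  obtain ⟨h1, h2⟩ := h
  have := int_key u.re u.im v.re v.im (by convert h1 using 1; ring) (by convert h2 using 1; ring)
  constructor
  · convert this.1 using 1; ring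
  · convert this.2 using 1; ring

/-- If `fh ≡ -1 (mod 4ℤ[i])`, then `{1, (i+γ)/2}` is a `ℤ[i]`-basis of `O_M` and the relative discriminant ideal of `M/K` is generated by `fh`. -/
theorem quadratic_basis_of_fh_cong_neg_one
    (f h : GaussianInt) (hf : Squarefree f) (hh : Squarefree h) (hfh : IsCoprime f h)
    (K M : Type*) [Field K] [Field M]
    [Algebra GaussianInt K] [IsFractionRing GaussianInt K]
    [Algebra K M] [Algebra GaussianInt M] [IsScalarTower GaussianInt K M]
    [FiniteDimensional K M] (hdim : Module.finrank K M = 2)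
    (γ : M) (hγ : γ ^ 2 = algebraMap GaussianInt M (f * h))
    (hgen : Algebra.adjoin K {γ} = ⊤)
    (hcong : (4 : GaussianInt) ∣ (f * h + 1)) :
    (∃ b : Module.Basis (Fin 2) GaussianInt (integralClosure GaussianInt M),
      (b 0 : M) = 1 ∧ algebraMap GaussianInt M 2 * (b 1 : M) = algebraMap GaussianInt M Zsqrtd.sqrtd + γ) ∧
    (∀ (b : Module.Basis (Fin 2) GaussianInt (integralClosure GaussianInt M))
        (D : GaussianInt),
        algebraMap GaussianInt K D = Algebra.discr K (fun i : Fin 2 => (b i : M)) →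
        Ideal.span {D} = Ideal.span {(f * h : GaussianInt)}) := by
  classical
  obtain ⟨c, hc⟩ := hcong
  have hRK : Function.Injective (algebraMap GaussianInt K) := IsFractionRing.injective _ _
  have hKM : Function.Injective (algebraMap K M) := (algebraMap K M).injective
  have hRM : Function.Injective (algebraMap GaussianInt M) := by
    rw [IsScalarTower.algebraMap_eq GaussianInt K M]; exact hKM.comp hRK
  have hsqfh : Squarefree (f * h) := squarefree_mul_iff.mpr ⟨hfh.isRelPrime, hf, hh⟩
  have hfh0 : f * h ≠ 0 := hsqfh.ne_zero
  set iR : GaussianInt := Zsqrtd.sqrtd with hiR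
  have hiR2 : iR ^ 2 = -1 := by ext <;> simp [hiR, pow_two, Zsqrtd.re_mul, Zsqrtd.im_mul]
  set fhK : K := algebraMap GaussianInt K (f * h) with hfhK
  have hfhK0 : fhK ≠ 0 := fun e => hfh0 (hRK (by rw [map_zero]; exact e))
  have htwoK : (2 : K) = algebraMap GaussianInt K 2 := by rw [map_ofNat]
  have htwoK0 : (2 : K) ≠ 0 := by
    rw [htwoK]; exact fun e => by simpa using hRK (e.trans (map_zero _).symm)
  have htwoM : (2 : M) = algebraMap GaussianInt M 2 := by rw [map_ofNat]
  have htwoM0 : (2 : M) ≠ 0 := by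
    rw [htwoM]; exact fun e => by simpa using hRM (e.trans (map_zero _).symm)
  set I : M := algebraMap GaussianInt M iR with hI
  have hI2 : I ^ 2 = -1 := by
    rw [hI, ← map_pow, hiR2, map_neg, map_one]
  set ω : M := (2 : M)⁻¹ * (I + γ) with hω
  have h2ω : (2 : M) * ω = I + γ := by
    rw [hω, ← mul_assoc, mul_inv_cancel₀ htwoM0, one_mul]
  have hγK : γ ^ 2 = algebraMap K M fhK := by
    rw [hγ, hfhK, ← IsScalarTower.algebraMap_apply]
  have hcM : algebraMap GaussianInt M (f*h) + 1 = 4 * algebraMap GaussianInt M c := by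
    rw [show (4 : M) = algebraMap GaussianInt M 4 by rw [map_ofNat], ← map_mul, ← hc, map_add,
      map_one]
  have hωsq : ω ^ 2 = I * ω + algebraMap GaussianInt M c := by
    have h4 : (4 : M) ≠ 0 := by
      intro e; apply htwoM0
      have : (2:M) * 2 = 0 := by rw [← e]; norm_num
      rcases mul_eq_zero.mp this with e | e <;> exact e
    apply mul_left_cancel₀ h4
    have e1 : (4:M) * ω ^ 2 = ((2:M) * ω)^2 := by ring
    have e2 : (4:M) * (I * ω + algebraMap GaussianInt M c) = 2 * I * ((2:M)*ω) +
        4 * algebraMap GaussianInt M c := by ring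
    rw [e1, e2, h2ω, ← hcM]
    linear_combination hγ - hI2
  -- ω is integral
  have hωint : IsIntegral GaussianInt ω := by
    refine ⟨Polynomial.X ^ 2 - (Polynomial.C iR * Polynomial.X + Polynomial.C c), ?_, ?_⟩
    · apply Polynomial.monic_X_pow_sub
      apply lt_of_le_of_lt (Polynomial.degree_add_le _ _)
      rw [max_lt_iff]
      constructor
      · exact lt_of_le_of_lt (Polynomial.degree_C_mul_X_le _) (by norm_num)
      · exact lt_of_le_of_lt Polynomial.degree_C_le (by norm_num)
    · simp only [Polynomial.eval₂_sub, Polynomial.eval₂_pow, Polynomial.eval₂_X,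
        Polynomial.eval₂_add, Polynomial.eval₂_mul, Polynomial.eval₂_C]
      rw [hωsq, hI]
      ring
  -- power basis
  have hγint : IsIntegral K γ := IsIntegral.of_finite K γ
  let pb : PowerBasis K M := (Algebra.adjoin.powerBasis hγint).map
    ((Subalgebra.equivOfEq _ _ hgen).trans Subalgebra.topEquiv)
  have hpbgen : pb.gen = γ := rfl
  have hpdim : pb.dim = 2 := by rw [← pb.finrank, hdim]
  -- minimal polynomial
  have hmin : minpoly K γ = Polynomial.X ^ 2 - Polynomial.C fhK := by
    have hmon : (Polynomial.X ^ 2 - Polynomial.C fhK).Monic :=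
      Polynomial.monic_X_pow_sub (lt_of_le_of_lt Polynomial.degree_C_le (by norm_num))
    have hdvd : minpoly K γ ∣ Polynomial.X ^ 2 - Polynomial.C fhK := by
      apply minpoly.dvd
      simp only [map_sub, map_pow, Polynomial.aeval_X, Polynomial.aeval_C]
      rw [hγK, sub_self]
    have hdeg : (minpoly K γ).natDegree = 2 := by
      rw [← hpbgen, pb.natDegree_minpoly, hpdim]
    exact (Polynomial.eq_of_monic_of_dvd_of_natDegree_le (minpoly.monic hγint) hmon hdvd
      (by rw [hdeg, Polynomial.natDegree_X_pow_sub_C])).symm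
  -- conjugation
  have hroot : Polynomial.aeval (-γ) (minpoly K pb.gen) = 0 := by
    rw [hpbgen, hmin]
    simp only [map_sub, map_pow, Polynomial.aeval_X, Polynomial.aeval_C]
    rw [neg_pow, hγK]; ring
  let σ : M →ₐ[K] M := pb.lift (-γ) hroot
  have hσγ : σ γ = -γ := by
    conv_lhs => rw [← hpbgen]
    exact pb.lift_gen _ hroot
  -- basis of M over K
  let B2 : Module.Basis (Fin 2) K M := pb.basis.reindex (finCongr hpdim)
  have hB2_0 : B2 0 = 1 := by
    simp only [B2, Module.Basis.reindex_apply, pb.coe_basis]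
    rw [hpbgen]
    norm_num
  have hB2_1 : B2 1 = γ := by
    simp only [B2, Module.Basis.reindex_apply, pb.coe_basis]
    rw [hpbgen]
    norm_num
  -- gamma is not in K
  have hγnotin : ∀ k : K, γ ≠ algebraMap K M k := by
    intro k hk
    have hbot : Algebra.adjoin K {γ} ≤ ⊥ := by
      rw [Algebra.adjoin_le_iff, Set.singleton_subset_iff, hk]
      exact ⟨k, rfl⟩
    have : (⊥ : Subalgebra K M) = ⊤ := le_antisymm le_top (hgen ▸ hbot)
    have h1 := Subalgebra.bot_eq_top_iff_finrank_eq_one.mp this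
    rw [hdim] at h1
    norm_num at h1
  -- key membership lemma
  have key : ∀ x : M, IsIntegral GaussianInt x →
      ∃ s t : GaussianInt, x = algebraMap GaussianInt M s + t • ω := by
    intro x hxint
    set a : K := B2.repr x 0 with ha
    set b0 : K := B2.repr x 1 with hb0
    have hx : x = algebraMap K M a + algebraMap K M b0 * γ := by
      have := B2.sum_repr x
      rw [Fin.sum_univ_two, hB2_0, hB2_1, ← ha, ← hb0] at this
      rw [← this, Algebra.smul_def, Algebra.smul_def, mul_one]
    have hσx : σ x = algebraMap K M a - algebraMap K M b0 * γ := by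
      rw [hx, map_add, map_mul, σ.commutes, σ.commutes, hσγ]
      ring
    have hσint : IsIntegral GaussianInt (σ x) :=
      hxint.map (σ.restrictScalars GaussianInt)
    have hKint : ∀ y : K, IsIntegral GaussianInt (algebraMap K M y) →
        ∃ r : GaussianInt, algebraMap GaussianInt K r = y := by
      intro y hy
      rw [isIntegral_algebraMap_iff hKM] at hy
      exact IsIntegrallyClosed.isIntegral_iff.mp hy
    obtain ⟨u, hu⟩ : ∃ r : GaussianInt, algebraMap GaussianInt K r = 2 * a := by
      apply hKint
      have : algebraMap K M (2 * a) = x + σ x := by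
        rw [hσx, hx, map_mul, map_ofNat]; ring
      rw [this]; exact hxint.add hσint
    obtain ⟨N, hN⟩ : ∃ r : GaussianInt, algebraMap GaussianInt K r = a^2 - fhK * b0^2 := by
      apply hKint
      have : algebraMap K M (a^2 - fhK * b0^2) = x * σ x := by
        rw [hσx, hx]
        simp only [map_sub, map_pow, map_mul]
        linear_combination (algebraMap K M b0 ^ 2) * hγK
      rw [this]; exact hxint.mul hσint
    have hKidentity : fhK * (2 * b0)^2 = algebraMap GaussianInt K (u^2 - 4*N) := by
      simp only [map_sub, map_pow, map_mul, map_ofNat, hu, hN]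
      ring
    obtain ⟨w, hw⟩ : ∃ r : GaussianInt, algebraMap GaussianInt K r = fhK * (2 * b0) := by
      apply IsIntegrallyClosed.isIntegral_iff.mp
      refine ⟨Polynomial.X ^ 2 - Polynomial.C ((f*h) * (u^2 - 4*N)), ?_, ?_⟩
      · apply Polynomial.monic_X_pow_sub (lt_of_le_of_lt Polynomial.degree_C_le (by norm_num))
      · simp only [Polynomial.eval₂_sub, Polynomial.eval₂_pow, Polynomial.eval₂_X,
          Polynomial.eval₂_C]
        rw [map_mul, ← hKidentity, ← hfhK]
        ring
    have hw2 : w^2 = (f*h) * (u^2 - 4*N) := by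
      apply hRK
      rw [map_pow, hw, map_mul, ← hfhK, ← hKidentity]
      ring
    have hfhw : f * h ∣ w := (hsqfh.dvd_pow_iff_dvd two_ne_zero).mp ⟨u^2 - 4*N, hw2⟩
    obtain ⟨v, hv⟩ := hfhw
    have hvb : algebraMap GaussianInt K v = 2 * b0 := by
      apply mul_left_cancel₀ hfhK0
      rw [← hw, hv, map_mul, hfhK]
    have huv : u^2 - (f*h) * v^2 = 4 * N := by
      apply hRK
      simp only [map_sub, map_pow, map_mul, map_ofNat, hu, hvb, hN, ← hfhK]
      ring
    have hdvd4 : (4 : GaussianInt) ∣ u^2 + v^2 := ⟨N + c * v^2, by linear_combination huv + v^2 * hc⟩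
    obtain ⟨s, hs⟩ := gauss_key u v hdvd4
    refine ⟨s, v, ?_⟩
    apply mul_left_cancel₀ htwoM0
    have hA1 : algebraMap GaussianInt M u = 2 * algebraMap K M a := by
      rw [IsScalarTower.algebraMap_apply GaussianInt K M, hu, map_mul, map_ofNat]
    have hA2 : algebraMap GaussianInt M v = 2 * algebraMap K M b0 := by
      rw [IsScalarTower.algebraMap_apply GaussianInt K M, hvb, map_mul, map_ofNat]
    have hA4 : algebraMap GaussianInt M u = 2 * algebraMap GaussianInt M s +
        I * algebraMap GaussianInt M v := by
      have h' : u = 2 * s + iR * v := by linear_combination hs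
      rw [h', map_add, map_mul, map_mul, map_ofNat, hI]
    rw [hx, Algebra.smul_def]
    linear_combination -hA1 + hA4 - algebraMap GaussianInt M v * h2ω - γ * hA2
  -- K-linear independence of ![1, ω]
  set iK : K := algebraMap GaussianInt K iR with hiK
  have hIiK : I = algebraMap K M iK := by
    rw [hI, hiK, IsScalarTower.algebraMap_apply GaussianInt K M]
  have hωne : ω ≠ 0 := by
    intro e
    apply hγnotin (-iK)
    have h0 : (2:M) * ω = 0 := by rw [e, mul_zero]
    rw [h2ω] at h0
    rw [map_neg, ← hIiK]
    linear_combination h0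
  have liK : LinearIndependent K ![(1:M), ω] := by
    rw [linearIndependent_fin2]
    refine ⟨by simpa using hωne, ?_⟩
    intro k hk
    simp only [Matrix.cons_val_one, Matrix.head_cons, Matrix.cons_val_zero] at hk
    by_cases hk0 : k = 0
    · rw [hk0, zero_smul] at hk
      exact one_ne_zero hk.symm
    · apply hγnotin (k⁻¹ * (2 - k * iK))
      have hkM : algebraMap K M k ≠ 0 := fun e => hk0 (hKM (by rw [map_zero]; exact e))
      apply mul_left_cancel₀ hkM
      rw [← map_mul, mul_inv_cancel_left₀ hk0, map_sub, map_ofNat, map_mul, ← hIiK]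
      have hk' : algebraMap K M k * ω = 1 := by rw [← Algebra.smul_def]; exact hk
      linear_combination 2 * hk' - algebraMap K M k * h2ω
  have liR : LinearIndependent GaussianInt ![(1:M), ω] := by
    apply liK.restrict_scalars
    simp only [← Algebra.algebraMap_eq_smul_one]
    exact hRK
  set E : Fin 2 → integralClosure GaussianInt M :=
    ![⟨1, isIntegral_one⟩, ⟨ω, hωint⟩] with hE
  have liE : LinearIndependent GaussianInt E := by
    apply LinearIndependent.of_comp (integralClosure GaussianInt M).val.toLinearMap
    have : (integralClosure GaussianInt M).val.toLinearMap ∘ E = ![(1:M), ω] := by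
      funext i; fin_cases i <;> rfl
    rw [this]; exact liR
  have hspan : ⊤ ≤ Submodule.span GaussianInt (Set.range E) := by
    rintro ⟨y, hy⟩ -
    obtain ⟨s, t, hst⟩ := key y hy
    have hmem : (⟨y, hy⟩ : integralClosure GaussianInt M) = s • E 0 + t • E 1 := by
      apply Subtype.ext
      show y = ((s • E 0 + t • E 1 : integralClosure GaussianInt M) : M)
      push_cast
      rw [hE]
      simp only [Matrix.cons_val_zero, Matrix.cons_val_one, Matrix.head_cons]
      rw [hst, Algebra.smul_def s (1:M), mul_one]
    rw [hmem]
    exact add_mem (Submodule.smul_mem _ _ (Submodule.subset_span ⟨0, rfl⟩))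
      (Submodule.smul_mem _ _ (Submodule.subset_span ⟨1, rfl⟩))
  let bZ : Module.Basis (Fin 2) GaussianInt (integralClosure GaussianInt M) := Module.Basis.mk liE hspan
  have hbZ0 : (bZ 0 : M) = 1 := by rw [Module.Basis.mk_apply]; rfl
  have hbZ1 : (bZ 1 : M) = ω := by rw [Module.Basis.mk_apply]; rfl
  -- traces
  set cK : K := algebraMap GaussianInt K c with hcK
  have hcKM : algebraMap GaussianInt M c = algebraMap K M cK := by
    rw [hcK, IsScalarTower.algebraMap_apply GaussianInt K M]
  have tr1 : Algebra.trace K M 1 = 2 := by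
    have := Algebra.trace_algebraMap (S := M) (1 : K)
    rw [map_one, hdim] at this
    rw [this]
    norm_num
  have trγ : Algebra.trace K M γ = 0 := by
    have hgen' := pb.trace_gen_eq_nextCoeff_minpoly
    rw [hpbgen, hmin] at hgen'
    rw [hgen', Polynomial.nextCoeff_of_natDegree_pos
      (by rw [Polynomial.natDegree_X_pow_sub_C]; norm_num)]
    rw [Polynomial.natDegree_X_pow_sub_C]
    simp [Polynomial.coeff_X_pow]
  have trI : Algebra.trace K M I = 2 * iK := by
    rw [hIiK, Algebra.trace_algebraMap, hdim]
    rw [nsmul_eq_mul]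
    norm_num
  have trω : Algebra.trace K M ω = iK := by
    have hωs : ω = (2:K)⁻¹ • (I + γ) := by
      rw [Algebra.smul_def, map_inv₀, map_ofNat, hω]
    rw [hωs, map_smul, map_add, trI, trγ, add_zero, smul_eq_mul]
    field_simp
  have trω2 : Algebra.trace K M (ω^2) = -1 + 2 * cK := by
    have hIω : I * ω = iK • ω := by rw [Algebra.smul_def, ← hIiK]
    rw [hωsq, hcKM, map_add, hIω, map_smul, trω, Algebra.trace_algebraMap, hdim, smul_eq_mul,
      nsmul_eq_mul]
    have hiK2 : iK * iK = -1 := by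
      rw [hiK, ← map_mul, ← pow_two, hiR2, map_neg, map_one]
    rw [hiK2]
    norm_num
  have hiK2' : iK^2 = -1 := by
    rw [hiK, ← map_pow, hiR2, map_neg, map_one]
  have hcK4 : fhK + 1 = 4 * cK := by
    rw [hfhK, hcK, show (4:K) = algebraMap GaussianInt K 4 from (map_ofNat _ 4).symm, ← map_mul,
      ← hc, map_add, map_one]
  have dsc : Algebra.discr K (fun i : Fin 2 => (bZ i : M)) = fhK := by
    rw [Algebra.discr_def, Matrix.det_fin_two]
    simp only [Algebra.traceMatrix_apply, Algebra.traceForm_apply]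
    rw [hbZ0, hbZ1]
    simp only [one_mul, mul_one, ← pow_two]
    rw [one_pow, tr1, trω, trω2]
    linear_combination -hcK4 - hiK2'
  refine ⟨⟨bZ, hbZ0, ?_⟩, ?_⟩
  · rw [hbZ1, ← htwoM, h2ω, hI]
  · intro b D hD
    set P : Matrix (Fin 2) (Fin 2) GaussianInt := bZ.toMatrix ⇑b with hP
    have hfam : (fun i : Fin 2 => (b i : M)) =
        Matrix.vecMul (fun i : Fin 2 => (bZ i : M)) ((P.map (algebraMap GaussianInt K)).map (algebraMap K M)) := by
      funext j
      have hsum := bZ.sum_toMatrix_smul_self (v := ⇑b) (j := j)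
      have : (b j : M) = ((∑ i, P i j • bZ i : integralClosure GaussianInt M) : M) := by
        rw [hP, hsum]
      rw [this]
      push_cast
      simp only [Matrix.vecMul, dotProduct, Matrix.map_apply, Fin.sum_univ_two]
      rw [Algebra.smul_def, Algebra.smul_def]
      rw [IsScalarTower.algebraMap_apply GaussianInt K M, IsScalarTower.algebraMap_apply GaussianInt K M]
      ring
    have hdisc_b : Algebra.discr K (fun i : Fin 2 => (b i : M)) =
        (algebraMap GaussianInt K P.det)^2 * fhK := by
      rw [hfam, Algebra.discr_of_matrix_vecMul, dsc, RingHom.map_det, RingHom.mapMatrix_apply]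
    have hDval : D = P.det^2 * (f*h) := by
      apply hRK
      rw [hD, hdisc_b, map_mul, map_pow, hfhK]
    have hunit : IsUnit P.det := by
      apply IsUnit.of_mul_eq_one (b.toMatrix ⇑bZ).det
      rw [← Matrix.det_mul, hP, Module.Basis.toMatrix_mul_toMatrix_flip, Matrix.det_one]
    rw [Ideal.span_singleton_eq_span_singleton]
    refine Associated.symm ⟨(hunit.pow 2).unit, ?_⟩
    rw [IsUnit.unit_spec]
    linear_combination -hDval
end

section
/- If fh ≡ 1+2i (mod 4ℤ[i]), then {1, (1+γ)/(1+i)} is a ℤ[i]-module basis of O_M and the relative discriminant ideal of M/K is generated by 2fh. -/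
set_option synthInstance.maxHeartbeats 1000000
set_option maxHeartbeats 1000000

open Polynomial

private lemma zmod_key4 : ∀ a b p q : ZMod 4,
    (a*a - b*b - (p*p - q*q - 4*(p*q)) = 0) →
    (2*(a*b) - (2*(p*q) + 2*(p*p - q*q)) = 0) →
    (2*(p+q) = 0 ∧ 2*(a-p) = 0 ∧ 2*(b-q) = 0) := by decide

private lemma int_two_dvd_of_zmod4 (n : ℤ) (hn : 2 * (n : ZMod 4) = 0) : 2 ∣ n := by
  have : ((2 * n : ℤ) : ZMod 4) = 0 := by push_cast; simpa using hn
  have h4 : (4:ℤ) ∣ 2 * n := by exact_mod_cast (ZMod.intCast_zmod_eq_zero_iff_dvd _ 4).mp this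
  omega

private lemma int_key4 (a b p q : ℤ) (hA : (4:ℤ) ∣ a*a - b*b - (p*p - q*q - 4*(p*q)))
    (hB : (4:ℤ) ∣ 2*(a*b) - (2*(p*q) + 2*(p*p - q*q))) :
    2 ∣ p + q ∧ 2 ∣ a - p ∧ 2 ∣ b - q := by
  have hA' : ((a*a - b*b - (p*p - q*q - 4*(p*q)) : ℤ) : ZMod 4) = 0 :=
    (ZMod.intCast_zmod_eq_zero_iff_dvd _ 4).mpr (by exact_mod_cast hA)
  have hB' : ((2*(a*b) - (2*(p*q) + 2*(p*p - q*q)) : ℤ) : ZMod 4) = 0 :=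
    (ZMod.intCast_zmod_eq_zero_iff_dvd _ 4).mpr (by exact_mod_cast hB)
  push_cast at hA' hB'
  obtain ⟨h1, h2, h3⟩ := zmod_key4 a b p q hA' hB'
  exact ⟨int_two_dvd_of_zmod4 _ (by push_cast; simpa using h1),
    int_two_dvd_of_zmod4 _ (by push_cast; simpa using h2),
    int_two_dvd_of_zmod4 _ (by push_cast; simpa using h3)⟩

private lemma gauss_key_cong (s t g : GaussianInt)
    (hg : (4:GaussianInt) ∣ g - (1 + 2*Zsqrtd.sqrtd))
    (h4 : (4:GaussianInt) ∣ s^2 - t^2*g) :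
    (1 - Zsqrtd.sqrtd) ∣ t ∧ (2:GaussianInt) ∣ s - t := by
  have h4' : (4:GaussianInt) ∣ s^2 - t^2*(1 + 2*Zsqrtd.sqrtd) := by
    obtain ⟨m, hm⟩ := hg
    obtain ⟨n, hn⟩ := h4
    exact ⟨n + t^2*m, by linear_combination hn + t^2 * hm⟩
  have hcoe : (4:GaussianInt) = ((4:ℤ) : GaussianInt) := by norm_num
  rw [hcoe, Zsqrtd.intCast_dvd] at h4'
  obtain ⟨hre, him⟩ := h4'
  have hre' : (4:ℤ) ∣ s.re*s.re - s.im*s.im - (t.re*t.re - t.im*t.im - 4*(t.re*t.im)) := by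
    convert hre using 1
    simp [pow_two, Zsqrtd.re_mul, Zsqrtd.im_mul, Zsqrtd.re_sub, Zsqrtd.im_sub]
    ring
  have him' : (4:ℤ) ∣ 2*(s.re*s.im) - (2*(t.re*t.im) + 2*(t.re*t.re - t.im*t.im)) := by
    convert him using 1
    simp [pow_two, Zsqrtd.re_mul, Zsqrtd.im_mul, Zsqrtd.re_sub, Zsqrtd.im_sub]
    ring
  obtain ⟨h1, h2, h3⟩ := int_key4 s.re s.im t.re t.im hre' him'
  constructor
  · obtain ⟨k, hk⟩ := h1
    refine ⟨⟨t.re - k, k⟩, ?_⟩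
    ext <;> simp [Zsqrtd.re_mul, Zsqrtd.im_mul, Zsqrtd.re_sub, Zsqrtd.im_sub] <;> omega
  · have : (2:GaussianInt) = ((2:ℤ) : GaussianInt) := by norm_num
    rw [this, Zsqrtd.intCast_dvd]
    constructor <;> simp [Zsqrtd.re_sub, Zsqrtd.im_sub] <;> omega

private lemma minpoly_eq_quadratic {K M : Type*} [Field K] [Field M] [Algebra K M]
    (z : M) (b c : K) (hroot : z^2 + (algebraMap K M b) * z + algebraMap K M c = 0)
    (hz : z ∉ Set.range (algebraMap K M)) :
    minpoly K z = X^2 + C b * X + C c := by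
  set q : K[X] := X^2 + C b * X + C c with hq
  have hqmonic : q.Monic := by
    have : q.natDegree = 2 := by unfold q; compute_degree!
    rw [Polynomial.Monic, Polynomial.leadingCoeff, this]
    unfold q
    simp [coeff_X, coeff_C]
  have hqdeg : q.natDegree = 2 := by unfold q; compute_degree!
  have haq : Polynomial.aeval z q = 0 := by
    simp only [hq, map_add, map_mul, map_pow, aeval_X, aeval_C]
    exact hroot
  have hint : IsIntegral K z := ⟨q, hqmonic, haq⟩
  have hdvd : minpoly K z ∣ q := minpoly.dvd _ _ haq
  have h2le : 2 ≤ (minpoly K z).natDegree := by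
    rw [minpoly.two_le_natDegree_iff hint]
    simpa [RingHom.mem_range] using hz
  have hle : (minpoly K z).natDegree ≤ 2 := by
    rw [← hqdeg]
    exact Polynomial.natDegree_le_of_dvd hdvd hqmonic.ne_zero
  obtain ⟨r, hr⟩ := hdvd
  have hpm : (minpoly K z).Monic := minpoly.monic hint
  have hrne : r ≠ 0 := by rintro rfl; rw [mul_zero] at hr; exact hqmonic.ne_zero hr
  have hrdeg : r.natDegree = 0 := by
    have := Polynomial.natDegree_mul hpm.ne_zero hrne
    rw [← hr, hqdeg] at this
    omega
  have hrlc : r.coeff 0 = 1 := by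
    have h1 : q.leadingCoeff = (minpoly K z).leadingCoeff * r.leadingCoeff := by
      rw [hr, leadingCoeff_mul]
    rw [hqmonic.leadingCoeff, hpm.leadingCoeff, one_mul] at h1
    rw [Polynomial.leadingCoeff, hrdeg] at h1; exact h1.symm
  have : r = 1 := by
    rw [Polynomial.eq_C_of_natDegree_eq_zero hrdeg, hrlc, map_one]
  rw [hr, this, mul_one]

private lemma isIntegral_quadratic {R M : Type*} [CommRing R] [Nontrivial R] [CommRing M] [Algebra R M]
    (z : M) (b c : R) (h : z^2 + algebraMap R M b * z + algebraMap R M c = 0) :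
    IsIntegral R z := by
  refine ⟨X^2 + C b * X + C c, ?_, ?_⟩
  · have hdeg : (X^2 + C b * X + C c : R[X]).natDegree = 2 := by compute_degree!
    rw [Polynomial.Monic, Polynomial.leadingCoeff, hdeg]
    simp [coeff_X, coeff_C]
  · simp only [eval₂_add, eval₂_mul, eval₂_pow, eval₂_X, eval₂_C]
    exact h

/-- If `fh ≡ 1+2i (mod 4ℤ[i])`, then `{1, (1+γ)/(1+i)}` is a `ℤ[i]`-basis of `O_M` and the relative discriminant ideal of `M/K` is generated by `2fh`. -/
theorem quadratic_basis_of_fh_cong_one_add_two_I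
    (f h : GaussianInt) (hf : Squarefree f) (hh : Squarefree h) (hfh : IsCoprime f h)
    (K M : Type*) [Field K] [Field M]
    [Algebra GaussianInt K] [IsFractionRing GaussianInt K]
    [Algebra K M] [Algebra GaussianInt M] [IsScalarTower GaussianInt K M]
    [FiniteDimensional K M] (hdim : Module.finrank K M = 2)
    (γ : M) (hγ : γ ^ 2 = algebraMap GaussianInt M (f * h))
    (hgen : Algebra.adjoin K {γ} = ⊤)
    (hcong : (4 : GaussianInt) ∣ (f * h - (1 + 2 * Zsqrtd.sqrtd))) :
    (∃ b : Module.Basis (Fin 2) GaussianInt (integralClosure GaussianInt M),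
      (b 0 : M) = 1 ∧ algebraMap GaussianInt M (1 + Zsqrtd.sqrtd) * (b 1 : M) = 1 + γ) ∧
    (∀ (b : Module.Basis (Fin 2) GaussianInt (integralClosure GaussianInt M))
        (D : GaussianInt),
        algebraMap GaussianInt K D = Algebra.discr K (fun i : Fin 2 => (b i : M)) →
        Ideal.span {D} = Ideal.span {(2 * (f * h) : GaussianInt)}) := by
  classical
  obtain ⟨m, hm⟩ := hcong
  set i : GaussianInt := Zsqrtd.sqrtd with hidef
  have hii : i * i = -1 := by decide
  set c : GaussianInt := -1 + 2*i*m with hcdef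
  -- injectivity and basic maps
  have injRK : Function.Injective (algebraMap GaussianInt K) := IsFractionRing.injective _ _
  have injKM : Function.Injective (algebraMap K M) := (algebraMap K M).injective
  have hmap : ∀ r : GaussianInt,
      algebraMap GaussianInt M r = algebraMap K M (algebraMap GaussianInt K r) := fun r =>
    IsScalarTower.algebraMap_apply _ _ _ r
  have injRM : Function.Injective (algebraMap GaussianInt M) := by
    intro x y hxy
    rw [hmap, hmap] at hxy
    exact injRK (injKM hxy)
  have hKne : ∀ r : GaussianInt, r ≠ 0 → algebraMap GaussianInt K r ≠ 0 := by
    intro r hr hc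
    exact hr (injRK (by simpa using hc))
  have hMne : ∀ r : GaussianInt, r ≠ 0 → algebraMap GaussianInt M r ≠ 0 := by
    intro r hr hc
    exact hr (injRM (by simpa using hc))
  have h1i0 : (1 + i : GaussianInt) ≠ 0 := by decide
  have h20 : (2 : GaussianInt) ≠ 0 := by decide
  -- u = inverse of (1+i) in K
  set u : K := (algebraMap GaussianInt K (1+i))⁻¹ with hudef
  have hu : algebraMap GaussianInt K (1+i) * u = 1 := mul_inv_cancel₀ (hKne _ h1i0)
  have hune : u ≠ 0 := by
    intro h0
    rw [h0, mul_zero] at hu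
    exact one_ne_zero hu.symm
  -- θ
  set θ : M := algebraMap K M u * (1 + γ) with hθdef
  have h1iθ : algebraMap GaussianInt M (1+i) * θ = 1 + γ := by
    rw [hθdef, hmap, ← mul_assoc, ← map_mul, hu, map_one, one_mul]
  -- γ not in the image of K
  have hγnr : γ ∉ Set.range (algebraMap K M) := by
    rintro ⟨k, hk⟩
    have hadj : Algebra.adjoin K {γ} ≤ ⊥ := by
      rw [Algebra.adjoin_le_iff]
      intro y hy
      rw [Set.mem_singleton_iff] at hy
      rw [hy, ← hk]
      exact ⟨k, rfl⟩
    have : (⊥ : Subalgebra K M) = ⊤ := le_antisymm le_top (hgen ▸ hadj)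
    have h1 := Subalgebra.bot_eq_top_iff_finrank_eq_one.mp this
    rw [hdim] at h1
    omega
  have hγM : γ^2 = algebraMap K M (algebraMap GaussianInt K (f*h)) := by
    rw [hγ, hmap]
  -- linear independence of 1, γ over K
  have hindep : ∀ a b : K, algebraMap K M a + algebraMap K M b * γ = 0 → a = 0 ∧ b = 0 := by
    intro a b hab
    by_cases hb : b = 0
    · refine ⟨?_, hb⟩
      rw [hb, map_zero, zero_mul, add_zero] at hab
      exact injKM (by simpa using hab)
    · exfalso
      apply hγnr
      have hbne : algebraMap K M b ≠ 0 := fun h0 => hb (injKM (by simpa using h0))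
      have hbγ : algebraMap K M b * γ = algebraMap K M (-a) := by
        rw [map_neg]; linear_combination hab
      refine ⟨-a/b, ?_⟩
      rw [map_div₀, map_neg, div_eq_iff hbne, mul_comm, ← map_neg]
      exact hbγ.symm
  -- decomposition of any element of M
  have hsp : ∀ x : M, ∃ a b : K, x = algebraMap K M a + algebraMap K M b * γ := by
    intro x
    have hx : x ∈ Algebra.adjoin K {γ} := by rw [hgen]; trivial
    induction hx using Algebra.adjoin_induction with
    | mem y hy =>
        rw [Set.mem_singleton_iff] at hy
        exact ⟨0, 1, by rw [hy]; simp⟩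
    | algebraMap k => exact ⟨k, 0, by simp⟩
    | add y z hy hz ihy ihz =>
        obtain ⟨a, b, rfl⟩ := ihy
        obtain ⟨a', b', rfl⟩ := ihz
        exact ⟨a + a', b + b', by simp only [map_add]; ring⟩
    | mul y z hy hz ihy ihz =>
        obtain ⟨a, b, rfl⟩ := ihy
        obtain ⟨a', b', rfl⟩ := ihz
        refine ⟨a*a' + b*b'*(algebraMap GaussianInt K (f*h)), a*b' + b*a', ?_⟩
        have hγM2 : γ^2 = algebraMap K M (algebraMap GaussianInt K f)
            * algebraMap K M (algebraMap GaussianInt K h) := by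
          rw [hγM, map_mul, map_mul]
        simp only [map_add, map_mul]
        linear_combination (algebraMap K M b * algebraMap K M b') * hγM2
  -- θ is integral: θ² - (1-i)θ + c = 0
  have hmM : algebraMap GaussianInt M f * algebraMap GaussianInt M h
      = 1 + 2*algebraMap GaussianInt M i + 4*algebraMap GaussianInt M m := by
    have := congrArg (algebraMap GaussianInt M) hm
    simp only [map_sub, map_add, map_mul, map_one, map_ofNat] at this
    linear_combination this
  have hγe : γ^2 = algebraMap GaussianInt M f * algebraMap GaussianInt M h := by
    rw [hγ, map_mul]
  have hγKe : γ^2 = algebraMap K M (algebraMap GaussianInt K f)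
      * algebraMap K M (algebraMap GaussianInt K h) := by
    rw [hγM, map_mul, map_mul]
  have h1iθe : (1 + algebraMap GaussianInt M i) * θ = 1 + γ := by
    have := h1iθ
    simp only [map_add, map_one] at this
    exact this
  have hiiM : algebraMap GaussianInt M i * algebraMap GaussianInt M i = -1 := by
    rw [← map_mul, hii, map_neg, map_one]
  have hθeq : θ^2 + algebraMap GaussianInt M (-(1-i)) * θ + algebraMap GaussianInt M c = 0 := by
    have h2M : algebraMap GaussianInt M ((1+i)^2) ≠ 0 := hMne _ (by decide)
    apply mul_left_cancel₀ h2M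
    rw [mul_zero]
    simp only [hcdef, map_neg, map_sub, map_add, map_mul, map_one, map_pow, map_ofNat]
    linear_combination ((1 + algebraMap GaussianInt M i)*θ + 1 + γ
        - (1 - (algebraMap GaussianInt M i)^2)) * h1iθe + hγe + hmM
        + (4*algebraMap GaussianInt M m + γ + 2*algebraMap GaussianInt M i
          * algebraMap GaussianInt M m) * hiiM
  have hθint : IsIntegral GaussianInt θ := isIntegral_quadratic θ _ _ hθeq
  have hsqfh : Squarefree (f*h) := squarefree_mul_iff.mpr ⟨hfh.isRelPrime, hf, hh⟩
  -- key representation of integral elements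
  have hrep : ∀ x : M, IsIntegral GaussianInt x →
      ∃ α β : GaussianInt, x = algebraMap GaussianInt M α + algebraMap GaussianInt M β * θ := by
    intro x hx
    obtain ⟨a, b, hab⟩ := hsp x
    by_cases hb : b = 0
    · rw [hb, map_zero, zero_mul, add_zero] at hab
      have hint : IsIntegral GaussianInt a :=
        (isIntegral_algebraMap_iff injKM).mp (by rwa [← hab])
      obtain ⟨r, hr⟩ := IsIntegrallyClosed.isIntegral_iff.mp hint
      exact ⟨r, 0, by rw [hab, hmap, hr, map_zero, zero_mul, add_zero]⟩
    · have hxnr : x ∉ Set.range (algebraMap K M) := by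
        rintro ⟨k, hk⟩
        apply hb
        have h0 : algebraMap K M (a - k) + algebraMap K M b * γ = 0 := by
          rw [map_sub]
          linear_combination -hab - hk
        exact (hindep _ _ h0).2
      have hroot : x^2 + algebraMap K M (-(2*a)) * x
          + algebraMap K M (a^2 - b^2 * algebraMap GaussianInt K (f*h)) = 0 := by
        simp only [map_neg, map_sub, map_mul, map_pow, map_ofNat]
        rw [hab]
        linear_combination (algebraMap K M b)^2 * hγKe
      have hmin : minpoly K x = X^2 + C (-(2*a)) * X
          + C (a^2 - b^2 * algebraMap GaussianInt K (f*h)) :=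
        minpoly_eq_quadratic x _ _ hroot hxnr
      have hminmap : minpoly K x = (minpoly GaussianInt x).map (algebraMap GaussianInt K) :=
        minpoly.isIntegrallyClosed_eq_field_fractions K M hx
      have hcoeff : ∀ n : ℕ, ∃ r : GaussianInt,
          algebraMap GaussianInt K r = (minpoly K x).coeff n := by
        intro n
        rw [hminmap]
        exact ⟨(minpoly GaussianInt x).coeff n, (Polynomial.coeff_map _ _).symm⟩
      obtain ⟨s', hs'⟩ := hcoeff 1
      obtain ⟨n, hn⟩ := hcoeff 0
      rw [hmin] at hs' hn
      have hs'1 : algebraMap GaussianInt K s' = -(2*a) := by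
        rw [hs']
        simp only [coeff_add, coeff_C_mul, coeff_X, coeff_C, coeff_X_pow]
        norm_num
      have hn0 : algebraMap GaussianInt K n
          = a^2 - b^2 * (algebraMap GaussianInt K (f*h)) := by
        rw [hn]
        simp only [coeff_add, coeff_C_mul, coeff_X, coeff_C, coeff_X_pow]
        norm_num
      rw [map_mul] at hn0
      set s : GaussianInt := -s' with hsdef
      have hsK : algebraMap GaussianInt K s = 2*a := by rw [hsdef, map_neg, hs'1, neg_neg]
      -- 2b comes from a Gaussian integer, by squarefreeness of f*h
      have h2b : ∃ t : GaussianInt, algebraMap GaussianInt K t = 2*b := by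
        set w : GaussianInt := s^2 - 4*n with hwdef
        have hwK : (2*b)^2 * (algebraMap GaussianInt K f * algebraMap GaussianInt K h)
            = algebraMap GaussianInt K w := by
          rw [hwdef]
          simp only [map_sub, map_mul, map_pow, map_ofNat]
          rw [hsK, hn0]
          ring
        set N := IsFractionRing.num GaussianInt (2*b) with hNdef
        set d := IsFractionRing.den GaussianInt (2*b) with hddef
        have hrel : IsRelPrime N (d:GaussianInt) := IsFractionRing.num_den_reduced _ _
        have hdK : algebraMap GaussianInt K (d:GaussianInt) ≠ 0 :=
          IsFractionRing.to_map_ne_zero_of_mem_nonZeroDivisors d.2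
        have hfrac : algebraMap GaussianInt K N
            = (2*b) * algebraMap GaussianInt K (d:GaussianInt) := by
          have := IsFractionRing.mk'_num_den' GaussianInt (2*b)
          rw [← hNdef, ← hddef] at this
          field_simp at this
          linear_combination this
        have hNfh : N^2 * (f*h) = w * (d:GaussianInt)^2 := by
          apply injRK
          simp only [map_mul, map_pow]
          linear_combination ((algebraMap GaussianInt K N)
              + 2*b*(algebraMap GaussianInt K (d:GaussianInt))) * (algebraMap GaussianInt K f)
              * (algebraMap GaussianInt K h) * hfrac
            + (algebraMap GaussianInt K (d:GaussianInt))^2 * hwK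
        have hdvdfh : ((d:GaussianInt))^2 ∣ f*h := by
          have h1 : ((d:GaussianInt))^2 ∣ N^2 * (f*h) := ⟨w, by rw [hNfh]; ring⟩
          exact (hrel.symm.pow).dvd_of_dvd_mul_left h1
        have hdunit : IsUnit (d:GaussianInt) := hsqfh _ (by rw [← pow_two]; exact hdvdfh)
        obtain ⟨ud, hud⟩ := hdunit
        refine ⟨N * ↑ud⁻¹, ?_⟩
        apply mul_right_cancel₀ hdK
        rw [← hfrac, ← map_mul]
        congr 1
        rw [mul_assoc, ← hud, Units.inv_mul, mul_one]
      obtain ⟨t, htK⟩ := h2b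
      have h4dvd : (4:GaussianInt) ∣ s^2 - t^2 * (f*h) := by
        refine ⟨n, injRK ?_⟩
        simp only [map_sub, map_mul, map_pow, map_ofNat]
        rw [hsK, htK, hn0]
        ring
      obtain ⟨hdvd1, hdvd2⟩ := gauss_key_cong s t (f*h) ⟨m, hm⟩ h4dvd
      obtain ⟨β, hβ⟩ := hdvd1
      obtain ⟨α, hα⟩ := hdvd2
      refine ⟨α, β, ?_⟩
      apply mul_left_cancel₀ (hMne 2 h20)
      have h2θ : algebraMap GaussianInt M 2 * θ = algebraMap GaussianInt M (1-i) * (1+γ) := by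
        have h2fact : (2:GaussianInt) = (1-i) * (1+i) := by decide
        rw [h2fact, map_mul, mul_assoc, h1iθ]
      have hxs : algebraMap GaussianInt M 2 * x
          = algebraMap GaussianInt M s + algebraMap GaussianInt M t * γ := by
        rw [hab, hmap s, hmap t, hsK, htK]
        simp only [map_mul, map_add, map_ofNat]
        ring
      have e1 := congrArg (algebraMap GaussianInt M) hα
      have e2 := congrArg (algebraMap GaussianInt M) hβ
      rw [hxs, mul_add, ← mul_assoc, mul_comm (algebraMap GaussianInt M 2)
        (algebraMap GaussianInt M β), mul_assoc, h2θ]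
      simp only [map_sub, map_mul, map_add, map_one, map_ofNat] at e1 e2 ⊢
      linear_combination e1 + (1 + γ) * e2
  -- basis elements
  have hθmem : θ ∈ integralClosure GaussianInt M := hθint
  set e0 : integralClosure GaussianInt M := 1 with he0
  set e1 : integralClosure GaussianInt M := ⟨θ, hθmem⟩ with he1
  have hliR : LinearIndependent GaussianInt ![e0, e1] := by
    rw [LinearIndependent.pair_iff]
    intro p q hpq
    have hcoe : algebraMap GaussianInt M p * 1 + algebraMap GaussianInt M q * θ = 0 := by
      have h0 := congrArg (fun z : integralClosure GaussianInt M => (z : M)) hpq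
      simpa [Algebra.smul_def, he0] using h0
    have hKform : algebraMap K M (algebraMap GaussianInt K p + algebraMap GaussianInt K q * u)
        + algebraMap K M (algebraMap GaussianInt K q * u) * γ = 0 := by
      simp only [map_add, map_mul]
      rw [← hmap p, ← hmap q]
      rw [hθdef] at hcoe
      linear_combination hcoe
    obtain ⟨h1, h2⟩ := hindep _ _ hKform
    have hq0 : algebraMap GaussianInt K q = 0 := by
      rcases mul_eq_zero.mp h2 with h | h
      · exact h
      · exact absurd h hune
    have hq : q = 0 := injRK (by rw [hq0, map_zero])
    refine ⟨?_, hq⟩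
    rw [hq0, zero_mul, add_zero] at h1
    exact injRK (by rw [h1, map_zero])
  have hspR : ⊤ ≤ Submodule.span GaussianInt (Set.range ![e0, e1]) := by
    intro y _
    obtain ⟨α, β, hy⟩ := hrep (y : M) y.2
    have hyeq : y = α • e0 + β • e1 := by
      apply Subtype.ext
      change (y:M) = ((α • e0 + β • e1 : integralClosure GaussianInt M) : M)
      rw [hy]
      simp [Algebra.smul_def, he0, he1]
    rw [hyeq]
    exact Submodule.add_mem _
      (Submodule.smul_mem _ _ (Submodule.subset_span ⟨0, rfl⟩))
      (Submodule.smul_mem _ _ (Submodule.subset_span ⟨1, rfl⟩))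
  set b₀ : Module.Basis (Fin 2) GaussianInt (integralClosure GaussianInt M) :=
    Module.Basis.mk hliR hspR with hb₀def
  have hb₀0 : (b₀ 0 : M) = 1 := by rw [hb₀def, Module.Basis.mk_apply]; rfl
  have hb₀1 : (b₀ 1 : M) = θ := by rw [hb₀def, Module.Basis.mk_apply]; rfl
  constructor
  · exact ⟨b₀, hb₀0, by rw [hb₀1]; exact h1iθ⟩
  -- Part 2: discriminant
  -- K-basis (1, γ)
  have hliK : LinearIndependent K ![(1:M), γ] := by
    rw [LinearIndependent.pair_iff]
    intro p q hpq
    refine hindep p q ?_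
    rw [Algebra.smul_def, mul_one, Algebra.smul_def] at hpq
    exact hpq
  have hspanK : ⊤ ≤ Submodule.span K (Set.range ![(1:M), γ]) := by
    intro x _
    obtain ⟨a, b, rfl⟩ := hsp x
    have h0 : ((1:M) ∈ Set.range ![(1:M), γ]) := ⟨0, rfl⟩
    have h1 : (γ ∈ Set.range ![(1:M), γ]) := ⟨1, rfl⟩
    have : algebraMap K M a + algebraMap K M b * γ = a • (1:M) + b • γ := by
      rw [Algebra.smul_def, mul_one, Algebra.smul_def]
    rw [this]
    exact Submodule.add_mem _
      (Submodule.smul_mem _ _ (Submodule.subset_span h0))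
      (Submodule.smul_mem _ _ (Submodule.subset_span h1))
  set B : Module.Basis (Fin 2) K M := Module.Basis.mk hliK hspanK with hBdef
  have hB0 : B 0 = 1 := by rw [hBdef, Module.Basis.mk_apply]; rfl
  have hB1 : B 1 = γ := by rw [hBdef, Module.Basis.mk_apply]; rfl
  -- traces
  have htrγ : Algebra.trace K M γ = 0 := by
    rw [Algebra.trace_eq_matrix_trace B, Matrix.trace_fin_two]
    have hd0 : Algebra.leftMulMatrix B γ 0 0 = 0 := by
      rw [Algebra.leftMulMatrix_eq_repr_mul, hB0, mul_one, ← hB1, B.repr_self]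
      simp
    have hd1 : Algebra.leftMulMatrix B γ 1 1 = 0 := by
      have hγB : γ * B 1 = (algebraMap GaussianInt K (f*h)) • B 0 := by
        rw [hB1, hB0, Algebra.smul_def, mul_one, ← pow_two]
        exact hγM
      rw [Algebra.leftMulMatrix_eq_repr_mul, hγB, LinearEquiv.map_smul, B.repr_self]
      simp
    rw [hd0, hd1, add_zero]
  have htrmap : ∀ k : K, Algebra.trace K M (algebraMap K M k) = 2 * k := by
    intro k
    rw [Algebra.trace_algebraMap, hdim, nsmul_eq_mul]
    push_cast
    ring
  have htr : ∀ p q : K, Algebra.trace K M (algebraMap K M p + algebraMap K M q * γ)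
      = 2 * p := by
    intro p q
    have hsm : algebraMap K M q * γ = q • γ := (Algebra.smul_def q γ).symm
    rw [map_add, htrmap, hsm, LinearMap.map_smul, htrγ, smul_zero, add_zero]
  have htr1 : Algebra.trace K M 1 = 2 := by
    have := htrmap 1
    rw [map_one] at this
    rw [this, mul_one]
  have hθcomb : θ = algebraMap K M u + algebraMap K M u * γ := by rw [hθdef]; ring
  have htrθ : Algebra.trace K M θ = 2 * u := by rw [hθcomb, htr]
  have h2u : 2 * u = algebraMap GaussianInt K (1-i) := by
    apply mul_left_cancel₀ (hKne _ h1i0)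
    rw [← map_mul]
    have h2fact : (1+i) * (1-i) = 2 := by decide
    rw [h2fact, map_ofNat]
    linear_combination 2 * hu
  have hθ2 : θ^2 = algebraMap GaussianInt M (1-i) * θ - algebraMap GaussianInt M c := by
    simp only [map_neg] at hθeq
    linear_combination hθeq
  have htrθ2 : Algebra.trace K M (θ^2)
      = algebraMap GaussianInt K (1-i) * (2*u) - 2 * algebraMap GaussianInt K c := by
    have hθ2' : θ^2 = algebraMap K M (algebraMap GaussianInt K (1-i)) * θ
        - algebraMap K M (algebraMap GaussianInt K c) := by
      rw [← hmap, ← hmap]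
      exact hθ2
    have hsm : algebraMap K M (algebraMap GaussianInt K (1-i)) * θ
        = (algebraMap GaussianInt K (1-i)) • θ := (Algebra.smul_def _ θ).symm
    rw [hθ2', map_sub, hsm, LinearMap.map_smul, htrθ, smul_eq_mul, htrmap]
  -- the discriminant of (1, θ)
  set Dsc : GaussianInt := -(2*i*(f*h)) with hDscdef
  have hRid : (1-i)^2 - 4*c = Dsc := by
    rw [hDscdef, hcdef]
    linear_combination (2*i) * hm + 5 * hii
  have hdiscr0 : Algebra.discr K (fun j : Fin 2 => (b₀ j : M)) = algebraMap GaussianInt K Dsc := by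
    have hv0 : (fun j : Fin 2 => (b₀ j : M)) = ![(1:M), θ] := by
      funext j
      fin_cases j
      · exact hb₀0
      · exact hb₀1
    rw [hv0, Algebra.discr_def, Matrix.det_fin_two]
    simp only [Algebra.traceMatrix_apply, Algebra.traceForm_apply, Matrix.cons_val_zero,
      Matrix.cons_val_one, Matrix.head_cons]
    simp only [one_mul, mul_one]
    have hθθ : θ * θ = θ^2 := (pow_two θ).symm
    rw [hθθ, htr1, htrθ, htrθ2]
    have hRidK := congrArg (algebraMap GaussianInt K) hRid
    simp only [map_sub, map_pow, map_mul, map_ofNat, map_one] at hRidK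
    have h2u' := h2u
    simp only [map_sub, map_one] at h2u' hRidK ⊢
    linear_combination hRidK - (2*u - (1 - algebraMap GaussianInt K i)) * h2u'
  -- conclusion for an arbitrary basis
  intro b D hD
  set T : Matrix (Fin 2) (Fin 2) GaussianInt := b₀.toMatrix ⇑b with hT
  have hTunit : IsUnit T.det := by
    have h1 : T * b.toMatrix ⇑b₀ = 1 := b₀.toMatrix_mul_toMatrix_flip b
    exact IsUnit.of_mul_eq_one _ (by rw [← Matrix.det_mul, h1, Matrix.det_one])
  have hvec : (fun j : Fin 2 => (b j : M))
      = Matrix.vecMul (fun j : Fin 2 => (b₀ j : M))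
        ((T.map (algebraMap GaussianInt K)).map (algebraMap K M)) := by
    funext j
    have hsum := b₀.sum_toMatrix_smul_self ⇑b j
    have h0 := congrArg (fun z : integralClosure GaussianInt M => (z : M)) hsum
    simp only [Fin.sum_univ_two, Matrix.vecMul, dotProduct] at h0 ⊢
    rw [← h0]
    simp only [Matrix.map_apply, ← hmap]
    push_cast
    rw [Algebra.smul_def, Algebra.smul_def]
    ring
  have hdiscrb : Algebra.discr K (fun j : Fin 2 => (b j : M))
      = (algebraMap GaussianInt K T.det)^2 * algebraMap GaussianInt K Dsc := by
    rw [hvec, Algebra.discr_of_matrix_vecMul, hdiscr0, RingHom.map_det, RingHom.mapMatrix_apply]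
  have hDval : D = T.det^2 * Dsc := by
    apply injRK
    rw [hD, hdiscrb, map_mul, map_pow]
  rw [hDval, Ideal.span_singleton_eq_span_singleton]
  obtain ⟨tu, htu⟩ := hTunit
  have hiu : IsUnit (-i) := ⟨⟨-i, i, by decide, by decide⟩, rfl⟩
  obtain ⟨iu, hiu'⟩ := hiu
  refine Associated.symm ⟨tu^2 * iu, ?_⟩
  rw [Units.val_mul, Units.val_pow_eq_pow_val, htu, hiu', hDscdef]
  ring
end

section
/- Let {1, (a₀+α)/d₁, (b₀+b₁α+α²)/d₂, (c₀+c₁α+c₂α²+α³)/d₃} be a normalised integral basis of O_N over ℤ[i]. Then no prime π of ℤ[i] coprime to 1+i divides d₁; moreover, if (1+i) does not divide h, then (1+i)² does not divide d₁. -/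
open Polynomial

private lemma GIprime : Prime (1 + Zsqrtd.sqrtd : GaussianInt) := by
  rw [← UniqueFactorizationMonoid.irreducible_iff_prime]
  have hnorm : ((1 + Zsqrtd.sqrtd : GaussianInt).norm).natAbs = 2 := by decide
  constructor
  · intro hu
    have := Zsqrtd.norm_eq_one_iff.mpr hu
    omega
  · intro a b hab
    have h2 : (Zsqrtd.norm a).natAbs * (Zsqrtd.norm b).natAbs = 2 := by
      rw [← Int.natAbs_mul, ← Zsqrtd.norm_mul, ← hab, hnorm]
    have hdv : (Zsqrtd.norm a).natAbs ∣ 2 := ⟨_, h2.symm⟩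
    rcases (Nat.prime_two.eq_one_or_self_of_dvd _ hdv) with h1 | h1
    · exact Or.inl (Zsqrtd.norm_eq_one_iff.mp h1)
    · right
      rw [h1] at h2
      have : (Zsqrtd.norm b).natAbs = 1 := by omega
      exact Zsqrtd.norm_eq_one_iff.mp this

private lemma GIfour : (4 : GaussianInt) = -(1 + Zsqrtd.sqrtd) ^ 4 := by decide


private lemma not_pow4_dvd {f g h π : GaussianInt} (hf : Squarefree f) (hg : Squarefree g)
    (hh : Squarefree h) (hfg : IsCoprime f g) (hfh : IsCoprime f h) (hgh : IsCoprime g h)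
    (hπ : Prime π) : ¬ π ^ 4 ∣ f * g ^ 2 * h ^ 3 := by
  intro hd
  have hπ0 : π ≠ 0 := hπ.ne_zero
  have nd : ∀ {x y : GaussianInt}, IsCoprime x y → π ∣ x → ¬ π ∣ y :=
    fun hc ha hb => hπ.not_unit (hc.isUnit_of_dvd' ha hb)
  have key : ∀ x : GaussianInt, Squarefree x → π ∣ x → ∃ x', x = π * x' ∧ ¬ π ∣ x' := by
    rintro x hx ⟨x', rfl⟩
    exact ⟨x', rfl, fun hc => hπ.not_unit (hx π (mul_dvd_mul_left π hc))⟩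
  have cancel : ∀ (k : ℕ) (X : GaussianInt), k + 1 ≤ 4 → f * g ^ 2 * h ^ 3 = π ^ k * X →
      π ∣ X := by
    intro k X hk hX
    have h1 : π ^ k * π ∣ π ^ k * X := by
      rw [← pow_succ]
      exact dvd_trans (pow_dvd_pow π hk) (hX ▸ hd)
    exact (mul_dvd_mul_iff_left (pow_ne_zero k hπ0)).mp h1
  have hdvd1 : π ∣ f * g ^ 2 * h ^ 3 := dvd_trans (dvd_pow_self π (by norm_num)) hd
  rcases hπ.dvd_mul.mp hdvd1 with hfg' | hph
  · rcases hπ.dvd_mul.mp hfg' with hpf | hpg2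
    · -- π ∣ f
      obtain ⟨f', hfe, hf'⟩ := key f hf hpf
      have hng : ¬ π ∣ g := nd hfg hpf
      have hnh : ¬ π ∣ h := nd hfh hpf
      have := cancel 1 (f' * g ^ 2 * h ^ 3) (by norm_num) (by rw [hfe]; ring)
      rcases hπ.dvd_mul.mp this with h1 | h1
      · rcases hπ.dvd_mul.mp h1 with h2 | h2
        · exact hf' h2
        · exact hng (hπ.dvd_of_dvd_pow h2)
      · exact hnh (hπ.dvd_of_dvd_pow h1)
    · -- π ∣ g
      have hpg := hπ.dvd_of_dvd_pow hpg2
      obtain ⟨g', hge, hg'⟩ := key g hg hpg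
      have hnf : ¬ π ∣ f := nd hfg.symm hpg
      have hnh : ¬ π ∣ h := nd hgh hpg
      have := cancel 2 (f * g' ^ 2 * h ^ 3) (by norm_num) (by rw [hge]; ring)
      rcases hπ.dvd_mul.mp this with h1 | h1
      · rcases hπ.dvd_mul.mp h1 with h2 | h2
        · exact hnf h2
        · exact hg' (hπ.dvd_of_dvd_pow h2)
      · exact hnh (hπ.dvd_of_dvd_pow h1)
  · -- π ∣ h
    have hph' := hπ.dvd_of_dvd_pow hph
    obtain ⟨h', hhe, hh'⟩ := key h hh hph'
    have hnf : ¬ π ∣ f := nd hfh.symm hph'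
    have hng : ¬ π ∣ g := nd hgh.symm hph'
    have := cancel 3 (f * g ^ 2 * h' ^ 3) (by norm_num) (by rw [hhe]; ring)
    rcases hπ.dvd_mul.mp this with h1 | h1
    · rcases hπ.dvd_mul.mp h1 with h2 | h2
      · exact hnf h2
      · exact hng (hπ.dvd_of_dvd_pow h2)
    · exact hh' (hπ.dvd_of_dvd_pow h1)


private lemma main_dvd
    (m : GaussianInt)
    (K N : Type*) [Field K] [Field N]
    [Algebra GaussianInt K] [IsFractionRing GaussianInt K]
    [Algebra K N] [Algebra GaussianInt N] [IsScalarTower GaussianInt K N]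
    [FiniteDimensional K N] (hdim : Module.finrank K N = 4)
    (α : N) (hα : α ^ 4 = algebraMap GaussianInt N m)
    (hgen : Algebra.adjoin K {α} = ⊤)
    (a₀ d₁ : GaussianInt) (θ : N)
    (hint : IsIntegral GaussianInt θ)
    (hb1 : algebraMap GaussianInt N d₁ * θ = algebraMap GaussianInt N a₀ + α) :
    d₁ ^ 3 ∣ 4 * a₀ ^ 3 ∧ d₁ ^ 4 ∣ a₀ ^ 4 - m := by
  have hinj := IsFractionRing.injective GaussianInt K
  -- d₁ ≠ 0
  have hd1 : d₁ ≠ 0 := by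
    rintro rfl
    rw [map_zero, zero_mul] at hb1
    have hαeq : α = algebraMap K N (algebraMap GaussianInt K (-a₀)) := by
      rw [← IsScalarTower.algebraMap_apply, map_neg]
      linear_combination -hb1
    have hbot : Algebra.adjoin K {α} ≤ ⊥ := by
      apply Algebra.adjoin_le
      rw [Set.singleton_subset_iff]
      rw [SetLike.mem_coe, hαeq]
      exact Subalgebra.algebraMap_mem _ _
    have : (⊥ : Subalgebra K N) = ⊤ := le_antisymm le_top (hgen ▸ hbot)
    have := Subalgebra.bot_eq_top_iff_finrank_eq_one.mp this
    omega
  set δ := algebraMap GaussianInt K d₁ with hδ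
  set aa := algebraMap GaussianInt K a₀ with haa
  set μ := algebraMap GaussianInt K m with hμ
  have hδ0 : δ ≠ 0 := fun hc => hd1 (hinj (by rwa [map_zero]))
  have hintK : IsIntegral K θ := hint.tower_top
  have hb1' : algebraMap K N δ * θ = algebraMap K N aa + α := by
    rw [hδ, haa, ← IsScalarTower.algebraMap_apply, ← IsScalarTower.algebraMap_apply]
    exact hb1
  -- θ generates N over K
  have hθtop : Algebra.adjoin K {θ} = ⊤ := by
    rw [eq_top_iff, ← hgen]
    apply Algebra.adjoin_le
    rw [Set.singleton_subset_iff]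
    have hαeq2 : α = algebraMap K N δ * θ - algebraMap K N aa := by linear_combination -hb1'
    rw [SetLike.mem_coe, hαeq2]
    exact sub_mem (mul_mem (Subalgebra.algebraMap_mem _ _)
      (Algebra.self_mem_adjoin_singleton K θ)) (Subalgebra.algebraMap_mem _ _)
  have hdeg : (minpoly K θ).natDegree = 4 := by
    have h1 : IntermediateField.adjoin K {θ} = ⊤ :=
      IntermediateField.adjoin_eq_top_of_algebra K {θ} hθtop
    have h2 := IntermediateField.adjoin.finrank hintK
    rw [h1, IntermediateField.finrank_top', hdim] at h2
    omega
  -- the polynomial q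
  set q : K[X] := C (δ ^ 4) * X ^ 4 + C (-(4 * δ ^ 3 * aa)) * X ^ 3 +
    C (6 * δ ^ 2 * aa ^ 2) * X ^ 2 + C (-(4 * δ * aa ^ 3)) * X + C (aa ^ 4 - μ) with hqdef
  have hqform : q = (C δ * X - C aa) ^ 4 - C μ := by
    rw [hqdef]
    simp only [map_pow, map_mul, map_add, map_sub, map_neg, map_ofNat]
    ring
  have hq0 : aeval θ q = 0 := by
    rw [hqform]
    simp only [map_sub, map_pow, map_mul, aeval_X, aeval_C]
    rw [hb1', add_sub_cancel_left, hα, hμ, ← IsScalarTower.algebraMap_apply, sub_self]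
  have hqdeg : q.natDegree = 4 := by
    rw [hqdef]
    compute_degree!
  have hdvd : minpoly K θ ∣ q := minpoly.dvd K θ hq0
  obtain ⟨r, hr⟩ := hdvd
  have hqne : q ≠ 0 := fun hc => by rw [hc, natDegree_zero] at hqdeg; omega
  have hrne : r ≠ 0 := fun hc => hqne (by rw [hr, hc, mul_zero])
  have hrdeg : r.natDegree = 0 := by
    have := natDegree_mul (minpoly.ne_zero hintK) hrne
    rw [← hr, hqdeg, hdeg] at this
    omega
  have hrC : r = C (r.coeff 0) := (eq_C_of_natDegree_eq_zero hrdeg)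
  -- q.coeff 4 = δ^4, and monicity gives r.coeff 0 = δ^4
  have hmonic : (minpoly K θ).Monic := minpoly.monic hintK
  have hc4 : q.coeff 4 = δ ^ 4 := by
    rw [hqdef]
    simp only [coeff_add, coeff_C_mul, coeff_X_pow, coeff_X, coeff_C]
    norm_num
  have hrval : r.coeff 0 = δ ^ 4 := by
    have : q.coeff 4 = (minpoly K θ).coeff 4 * r.coeff 0 := by
      rw [hr, hrC, coeff_mul_C, coeff_C_zero]
    rw [hc4, show (minpoly K θ).coeff 4 = 1 from by
      rw [← hdeg]; exact hmonic.coeff_natDegree, one_mul] at this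
    exact this.symm
  have hqfact : q = minpoly K θ * C (δ ^ 4) := by rw [hr, hrC, hrval]
  -- coefficient identities
  have hc1 : q.coeff 1 = -(4 * δ * aa ^ 3) := by
    rw [hqdef]; simp only [coeff_add, coeff_C_mul, coeff_X_pow, coeff_X, coeff_C]; norm_num
  have hc0 : q.coeff 0 = aa ^ 4 - μ := by
    rw [hqdef]; simp only [coeff_add, coeff_C_mul, coeff_X_pow, coeff_X, coeff_C]; norm_num
  have e1 : (minpoly K θ).coeff 1 * δ ^ 4 = -(4 * δ * aa ^ 3) := by
    rw [← hc1, hqfact, coeff_mul_C]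
  have e0 : (minpoly K θ).coeff 0 * δ ^ 4 = aa ^ 4 - μ := by
    rw [← hc0, hqfact, coeff_mul_C]
  -- descend to ℤ[i]
  have hmap : minpoly K θ = (minpoly GaussianInt θ).map (algebraMap GaussianInt K) :=
    minpoly.isIntegrallyClosed_eq_field_fractions' K hint
  set u1 := (minpoly GaussianInt θ).coeff 1 with hu1
  set u0 := (minpoly GaussianInt θ).coeff 0 with hu0
  have e1' : algebraMap GaussianInt K (u1 * d₁ ^ 4) = algebraMap GaussianInt K (-(4 * d₁ * a₀ ^ 3)) := by
    simp only [map_mul, map_pow, map_neg, map_ofNat]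
    rw [← hδ, ← haa, ← e1, hmap, coeff_map]
  have e0' : algebraMap GaussianInt K (u0 * d₁ ^ 4) = algebraMap GaussianInt K (a₀ ^ 4 - m) := by
    simp only [map_mul, map_pow, map_sub]
    rw [← hδ, ← haa, ← hμ, ← e0, hmap, coeff_map]
  have E1 : u1 * d₁ ^ 4 = -(4 * d₁ * a₀ ^ 3) := hinj e1'
  have E0 : u0 * d₁ ^ 4 = a₀ ^ 4 - m := hinj e0'
  constructor
  · refine ⟨-u1, ?_⟩
    have : d₁ * (4 * a₀ ^ 3) = d₁ * (d₁ ^ 3 * -u1) := by linear_combination E1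
    exact mul_left_cancel₀ hd1 this
  · exact ⟨u0, by linear_combination -E0⟩

/-- Let `{1, (a₀+α)/d₁, (b₀+b₁α+α²)/d₂, (c₀+c₁α+c₂α²+α³)/d₃}` be a normalised integral
basis of `O_N` over `ℤ[i]`.  Then no prime `π` of `ℤ[i]` coprime to `1+i` divides `d₁`;
moreover, if `(1+i) ∤ h`, then `(1+i)² ∤ d₁`. -/
theorem quartic_kummer_d1_odd_part_trivial
    (f g h : GaussianInt) (hf : Squarefree f) (hg : Squarefree g) (hh : Squarefree h)
    (hfg : IsCoprime f g) (hfh : IsCoprime f h) (hgh : IsCoprime g h)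
    (K N : Type*) [Field K] [Field N]
    [Algebra GaussianInt K] [IsFractionRing GaussianInt K]
    [Algebra K N] [Algebra GaussianInt N] [IsScalarTower GaussianInt K N]
    [FiniteDimensional K N] (hdim : Module.finrank K N = 4)
    (α : N) (hα : α ^ 4 = algebraMap GaussianInt N (f * g ^ 2 * h ^ 3))
    (hgen : Algebra.adjoin K {α} = ⊤)
    (a₀ b₀ b₁ c₀ c₁ c₂ d₁ d₂ d₃ : GaussianInt)
    (bN : Module.Basis (Fin 4) GaussianInt (integralClosure GaussianInt N))
    (hb0 : (bN 0 : N) = 1)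
    (hb1 : algebraMap GaussianInt N d₁ * (bN 1 : N) = algebraMap GaussianInt N a₀ + α)
    (hb2 : algebraMap GaussianInt N d₂ * (bN 2 : N) =
      algebraMap GaussianInt N b₀ + algebraMap GaussianInt N b₁ * α + α ^ 2)
    (hb3 : algebraMap GaussianInt N d₃ * (bN 3 : N) =
      algebraMap GaussianInt N c₀ + algebraMap GaussianInt N c₁ * α +
        algebraMap GaussianInt N c₂ * α ^ 2 + α ^ 3) :
    (∀ π : GaussianInt, Prime π → IsCoprime π (1 + Zsqrtd.sqrtd) → ¬ π ∣ d₁) ∧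
    (¬ (1 + Zsqrtd.sqrtd : GaussianInt) ∣ h →
      ¬ (1 + Zsqrtd.sqrtd : GaussianInt) ^ 2 ∣ d₁) := by
  have hint : IsIntegral GaussianInt ((bN 1 : N)) := (bN 1).2
  obtain ⟨D3, D4⟩ := main_dvd (f * g ^ 2 * h ^ 3) K N hdim α hα hgen a₀ d₁ (bN 1 : N) hint hb1
  set π2 : GaussianInt := 1 + Zsqrtd.sqrtd with hπ2def
  have hπ2 : Prime π2 := GIprime
  constructor
  · intro π hπ hcop hdvd
    have hπ4 : ¬ π ∣ 4 := by
      intro hc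
      have h1 : π ∣ π2 ^ 4 := by
        rw [GIfour] at hc
        exact (dvd_neg).mp hc
      exact hπ.not_unit ((hcop.pow_right).isUnit_of_dvd' dvd_rfl h1)
    have hπa : π ∣ a₀ := by
      have h1 : π ∣ 4 * a₀ ^ 3 := dvd_trans hdvd (dvd_trans (dvd_pow_self d₁ (by norm_num)) D3)
      rcases hπ.dvd_mul.mp h1 with h2 | h2
      · exact absurd h2 hπ4
      · exact hπ.dvd_of_dvd_pow h2
    have hm : π ^ 4 ∣ f * g ^ 2 * h ^ 3 := by
      have h1 : π ^ 4 ∣ a₀ ^ 4 := pow_dvd_pow_of_dvd hπa 4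
      have h2 : π ^ 4 ∣ a₀ ^ 4 - f * g ^ 2 * h ^ 3 :=
        dvd_trans (pow_dvd_pow_of_dvd hdvd 4) D4
      have := dvd_sub h1 h2
      simpa using this
    exact not_pow4_dvd hf hg hh hfg hfh hgh hπ hm
  · intro _ hdvd
    have hπ20 : π2 ≠ 0 := hπ2.ne_zero
    have hπa : π2 ∣ a₀ := by
      have h1 : π2 ^ 6 ∣ 4 * a₀ ^ 3 := by
        refine dvd_trans ?_ D3
        calc π2 ^ 6 = (π2 ^ 2) ^ 3 := by ring
        _ ∣ d₁ ^ 3 := pow_dvd_pow_of_dvd hdvd 3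
      have h2 : π2 ^ 4 * π2 ∣ π2 ^ 4 * a₀ ^ 3 := by
        rw [← pow_succ]
        refine dvd_trans (pow_dvd_pow π2 (by norm_num : 5 ≤ 6)) ?_
        have heq : π2 ^ 4 * a₀ ^ 3 = -(4 * a₀ ^ 3) := by rw [GIfour]; ring
        rw [heq]
        exact (dvd_neg).mpr h1
      have h3 : π2 ∣ a₀ ^ 3 :=
        (mul_dvd_mul_iff_left (pow_ne_zero 4 hπ20)).mp h2
      exact hπ2.dvd_of_dvd_pow h3
    have hπd : π2 ∣ d₁ := dvd_trans (dvd_pow_self π2 (by norm_num)) hdvd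
    have hm : π2 ^ 4 ∣ f * g ^ 2 * h ^ 3 := by
      have h1 : π2 ^ 4 ∣ a₀ ^ 4 := pow_dvd_pow_of_dvd hπa 4
      have h2 : π2 ^ 4 ∣ a₀ ^ 4 - f * g ^ 2 * h ^ 3 :=
        dvd_trans (pow_dvd_pow_of_dvd hπd 4) D4
      have := dvd_sub h1 h2
      simpa using this
    exact not_pow4_dvd hf hg hh hfg hfh hgh hπ2 hm
end

section
/- If π is a prime element of ℤ[i] dividing f, g, or h, then the prime ideal (π) of ℤ[i] is ramified in the extension N/K, i.e. some prime ideal of O_N lying over (π) has ramification index greater than 1. -/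
set_option maxHeartbeats 1000000 in
open UniqueFactorizationMonoid in
/-- If `π` is a prime element of `ℤ[i]` dividing `f`, `g` or `h`, then the prime ideal `(π)`
ramifies in `N/K`: some prime of `O_N` lying over `(π)` has ramification index `> 1`. -/
theorem quartic_kummer_ramified_of_dvd
    (f g h : GaussianInt) (hf : Squarefree f) (hg : Squarefree g) (hh : Squarefree h)
    (hfg : IsCoprime f g) (hfh : IsCoprime f h) (hgh : IsCoprime g h)
    (K N : Type*) [Field K] [Field N]
    [Algebra GaussianInt K] [IsFractionRing GaussianInt K]
    [Algebra K N] [Algebra GaussianInt N] [IsScalarTower GaussianInt K N]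
    [FiniteDimensional K N] (hdim : Module.finrank K N = 4)
    (α : N) (hα : α ^ 4 = algebraMap GaussianInt N (f * g ^ 2 * h ^ 3))
    (hgen : Algebra.adjoin K {α} = ⊤)
    (π : GaussianInt) (hπ : Prime π) (hdvd : π ∣ f ∨ π ∣ g ∨ π ∣ h) :
    ∃ Q : Ideal (integralClosure GaussianInt N),
      Q.IsPrime ∧
      Q.comap (algebraMap GaussianInt (integralClosure GaussianInt N)) =
        Ideal.span {π} ∧
      1 < Ideal.ramificationIdx'
        (Ideal.span {π}) Q := by
  classical
  haveI : CharZero K := charZero_of_injective_algebraMap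
    (IsFractionRing.injective GaussianInt K)
  set B := integralClosure GaussianInt N
  haveI : IsDedekindDomain B := integralClosure.isDedekindDomain GaussianInt K N
  haveI : Algebra.IsIntegral GaussianInt B :=
    IsIntegralClosure.isIntegral_algebra GaussianInt N
  set φ : GaussianInt →+* B := algebraMap GaussianInt B
  have hφinj : Function.Injective φ := by
    have h1 : Function.Injective (algebraMap GaussianInt N) := by
      rw [IsScalarTower.algebraMap_eq GaussianInt K N]
      exact (algebraMap K N).injective.comp (IsFractionRing.injective GaussianInt K)
    have : (algebraMap B N).comp φ = algebraMap GaussianInt N :=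
      IsScalarTower.algebraMap_eq GaussianInt B N ▸ rfl
    intro x y hxy
    apply h1
    rw [← this]
    simp [hxy]
  -- nonzeroness
  have hf0 : f ≠ 0 := hf.ne_zero
  have hg0 : g ≠ 0 := hg.ne_zero
  have hh0 : h ≠ 0 := hh.ne_zero
  have hm0 : f * g ^ 2 * h ^ 3 ≠ 0 := by
    simp [hf0, hg0, hh0]
  -- write m = π ^ v * u with π ∤ u, 0 < v < 4
  obtain ⟨v, u, hm, hu, hv0, hv4⟩ :
      ∃ v u, f * g ^ 2 * h ^ 3 = π ^ v * u ∧ ¬ π ∣ u ∧ 0 < v ∧ v < 4 := by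
    have hnd : ∀ a b : GaussianInt, IsCoprime a b → π ∣ a → ¬ π ∣ b := fun a b hab ha hb =>
      hπ.not_unit (hab.isUnit_of_dvd' ha hb)
    rcases hdvd with hd | hd | hd
    · obtain ⟨f₁, rfl⟩ := hd
      have hπf₁ : ¬ π ∣ f₁ := fun hd => hπ.not_unit (hf π (mul_dvd_mul_left π hd))
      refine ⟨1, f₁ * g ^ 2 * h ^ 3, by ring, ?_, one_pos, by norm_num⟩
      intro hd
      rcases (hπ.dvd_mul.mp hd) with hd | hd
      · rcases hπ.dvd_mul.mp hd with hd | hd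
        · exact hπf₁ hd
        · exact hnd _ _ hfg (dvd_mul_right π f₁) (hπ.dvd_of_dvd_pow hd)
      · exact hnd _ _ hfh (dvd_mul_right π f₁) (hπ.dvd_of_dvd_pow hd)
    · obtain ⟨g₁, rfl⟩ := hd
      have hπg₁ : ¬ π ∣ g₁ := fun hd => hπ.not_unit (hg π (mul_dvd_mul_left π hd))
      refine ⟨2, f * g₁ ^ 2 * h ^ 3, by ring, ?_, two_pos, by norm_num⟩
      intro hd
      rcases (hπ.dvd_mul.mp hd) with hd | hd
      · rcases hπ.dvd_mul.mp hd with hd | hd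
        · exact hnd _ _ hfg.symm (dvd_mul_right π g₁) hd
        · exact hπg₁ (hπ.dvd_of_dvd_pow hd)
      · exact hnd _ _ hgh (dvd_mul_right π g₁) (hπ.dvd_of_dvd_pow hd)
    · obtain ⟨h₁, rfl⟩ := hd
      have hπh₁ : ¬ π ∣ h₁ := fun hd => hπ.not_unit (hh π (mul_dvd_mul_left π hd))
      refine ⟨3, f * g ^ 2 * h₁ ^ 3, by ring, ?_, three_pos, by norm_num⟩
      intro hd
      rcases (hπ.dvd_mul.mp hd) with hd | hd
      · rcases hπ.dvd_mul.mp hd with hd | hd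
        · exact hnd _ _ hfh.symm (dvd_mul_right π h₁) hd
        · exact hnd _ _ hgh.symm (dvd_mul_right π h₁) (hπ.dvd_of_dvd_pow hd)
      · exact hπh₁ (hπ.dvd_of_dvd_pow hd)
  have hu0 : u ≠ 0 := fun h0 => hm0 (by rw [hm, h0, mul_zero])
  -- α is integral, lives in B
  have hαint : IsIntegral GaussianInt α := by
    refine ⟨Polynomial.X ^ 4 - Polynomial.C (f * g ^ 2 * h ^ 3), ?_, ?_⟩
    · apply Polynomial.monic_X_pow_sub_C _ (by norm_num)
    · simp [Polynomial.eval₂_sub, hα]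
  set a : B := ⟨α, hαint⟩ with ha
  have haB : a ^ 4 = φ (π ^ v * u) := by
    ext
    push_cast [ha]
    rw [hα, hm, IsScalarTower.algebraMap_eq GaussianInt B N]
    rfl
  have ha0 : a ≠ 0 := fun h0 => hm0 (hφinj (show φ _ = φ 0 by
    rw [map_zero, hm, ← haB, h0, zero_pow (by norm_num)]))
  have hker : RingHom.ker φ = ⊥ := (RingHom.injective_iff_ker_eq_bot φ).mp hφinj
  -- the prime (π) in ℤ[i]
  have hπ0 : π ≠ 0 := hπ.ne_zero
  have hPprime : (Ideal.span {π} : Ideal GaussianInt).IsPrime := by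
    rwa [Ideal.span_singleton_prime hπ0]
  haveI := hPprime
  -- get Q over (π)
  obtain ⟨Q, -, hQprime, hQcomap⟩ :=
    Ideal.exists_ideal_over_prime_of_isIntegral (Ideal.span {π} : Ideal GaussianInt)
      (⊥ : Ideal B) (by
        rw [← RingHom.ker_eq_comap_bot, hker]
        exact bot_le)
  refine ⟨Q, hQprime, hQcomap, ?_⟩
  have hQ0 : Q ≠ ⊥ := fun h0 => hπ0 <| by
    rw [h0, ← RingHom.ker_eq_comap_bot, hker] at hQcomap
    exact Ideal.span_singleton_eq_bot.mp hQcomap.symm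
  have hQel : Prime Q := Ideal.prime_of_isPrime hQ0 hQprime
  have hmapspan : Ideal.map φ (Ideal.span {π}) = Ideal.span {φ π} := by
    rw [Ideal.map_span, Set.image_singleton]
  have hφπ0 : (Ideal.span {φ π} : Ideal B) ≠ ⊥ := by
    rw [Ne, Ideal.span_singleton_eq_bot]
    exact fun h0 => hπ0 (hφinj (h0.trans (map_zero φ).symm))
  -- ramification index = count
  have heq : Ideal.ramificationIdx' (Ideal.span {π}) Q =
      (normalizedFactors (Ideal.span {φ π} : Ideal B)).count Q := by
    rw [← hmapspan]
    exact Ideal.IsDedekindDomain.ramificationIdx'_eq_normalizedFactors_count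
      (hmapspan ▸ hφπ0) hQprime hQ0
  -- the count of Q in span {φ π} is positive
  have hπinQ : φ π ∈ Q := by
    have : π ∈ Q.comap φ := hQcomap ▸ Ideal.mem_span_singleton_self π
    exact this
  have hQdvd : Q ∣ Ideal.span {φ π} := by
    rw [Ideal.dvd_iff_le]
    exact Ideal.span_le.mpr (Set.singleton_subset_iff.mpr hπinQ)
  have hQmem : Q ∈ normalizedFactors (Ideal.span {φ π} : Ideal B) := by
    obtain ⟨q, hq, hqQ⟩ := exists_mem_normalizedFactors_of_dvd hφπ0 hQel.irreducible hQdvd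
    rwa [associated_iff_eq.mp hqQ]
  have he_pos : 0 < (normalizedFactors (Ideal.span {φ π} : Ideal B)).count Q :=
    Multiset.count_pos.mpr hQmem
  -- counts
  have ha_span0 : (Ideal.span {a} : Ideal B) ≠ ⊥ := by
    rw [Ne, Ideal.span_singleton_eq_bot]; exact ha0
  have hu_span0 : (Ideal.span {φ u} : Ideal B) ≠ ⊥ := by
    rw [Ne, Ideal.span_singleton_eq_bot]
    exact fun h0 => hu0 (hφinj (h0.trans (map_zero φ).symm))
  have hspan_eq : (Ideal.span {a} : Ideal B) ^ 4 =
      (Ideal.span {φ π}) ^ v * Ideal.span {φ u} := by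
    rw [Ideal.span_singleton_pow, Ideal.span_singleton_pow,
      Ideal.span_singleton_mul_span_singleton, haB, map_mul, map_pow]
  have h1 : normalizedFactors ((Ideal.span {a} : Ideal B) ^ 4) =
      4 • normalizedFactors (Ideal.span {a} : Ideal B) :=
    normalizedFactors_pow ..
  have h2 : normalizedFactors ((Ideal.span {φ π} : Ideal B) ^ v * Ideal.span {φ u}) =
      v • normalizedFactors (Ideal.span {φ π} : Ideal B) +
      normalizedFactors (Ideal.span {φ u} : Ideal B) := by
    rw [normalizedFactors_mul (pow_ne_zero _ hφπ0) hu_span0, normalizedFactors_pow]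
  have h3 : (4 • normalizedFactors (Ideal.span {a} : Ideal B)).count Q =
      (v • normalizedFactors (Ideal.span {φ π} : Ideal B) +
        normalizedFactors (Ideal.span {φ u} : Ideal B)).count Q := by
    rw [← h1, ← h2, hspan_eq]
  have hcount : 4 * (normalizedFactors (Ideal.span {a} : Ideal B)).count Q =
      v * (normalizedFactors (Ideal.span {φ π} : Ideal B)).count Q +
      (normalizedFactors (Ideal.span {φ u} : Ideal B)).count Q := by
    rw [Multiset.count_nsmul, Multiset.count_add, Multiset.count_nsmul] at h3
    exact h3
  -- u is not in Q
  have hucount : (normalizedFactors (Ideal.span {φ u} : Ideal B)).count Q = 0 := by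
    rw [Multiset.count_eq_zero]
    intro hmem
    have hle : Ideal.span {φ u} ≤ Q := Ideal.le_of_dvd (dvd_of_mem_normalizedFactors hmem)
    have huQ : φ u ∈ Q := hle (Ideal.mem_span_singleton_self _)
    have : u ∈ Q.comap φ := huQ
    rw [hQcomap, Ideal.mem_span_singleton] at this
    exact hu this
  rw [hucount, add_zero] at hcount
  rw [heq]
  interval_cases v <;> omega
end
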